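/- arXiv:1107.4145 — 9 statements merged into one kernel-verified Lean document; each statement's English description precedes it below -/
import Mathlib

section
/- If two analytic curve germs γ, σ : (ℝ,0) → (ℝⁿ,0), neither identically zero and with P∘γ, P∘σ not identically zero for some analytic P, are RL-equivalent, then their semigroups coincide: S(γ) = S(σ). In other words, the semigroup of a curve germ is an invariant of RL-equivalence. -/
open Filter

open Topology

/-- RL-equivalence of analytic curve germs `(ℝ,0) → (ℝⁿ,0)`:
there are an analytic germ `Φ : (ℝⁿ,0) → (ℝⁿ,0)` with invertible differential at `0`
and an analytic reparametrization `τ : (ℝ,0) → (ℝ,0)` with `τ'(0) ≠ 0`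
such that `σ = Φ ∘ γ ∘ τ` near `0`. -/
def RLEquiv {n : ℕ} (γ σ : ℝ → (Fin n → ℝ)) : Prop :=
  ∃ (Φ : (Fin n → ℝ) → (Fin n → ℝ)) (τ : ℝ → ℝ),
    AnalyticAt ℝ Φ 0 ∧ Φ 0 = 0 ∧ Function.Bijective (fderiv ℝ Φ 0) ∧
    AnalyticAt ℝ τ 0 ∧ τ 0 = 0 ∧ deriv τ 0 ≠ 0 ∧
    ∀ᶠ t in nhds (0 : ℝ), σ t = Φ (γ (τ t))

/-- The order of a function germ at `0`: the smallest `i` such that the `i`-th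
Taylor coefficient (equivalently, the `i`-th derivative) at `0` is nonzero. -/
noncomputable def ord (f : ℝ → ℝ) : ℕ := sInf {i : ℕ | iteratedDeriv i f 0 ≠ 0}

/-- The semigroup of a curve germ: all orders `ord (P ∘ γ)` where `P` ranges over
analytic germs `(ℝⁿ,0) → (ℝ,0)` with `P ∘ γ` not identically zero near `0`. -/
def curveSemigroup {n : ℕ} (γ : ℝ → (Fin n → ℝ)) : Set ℕ :=
  {k | ∃ P : (Fin n → ℝ) → ℝ, AnalyticAt ℝ P 0 ∧ P 0 = 0 ∧
      (¬ ∀ᶠ t in nhds (0 : ℝ), P (γ t) = 0) ∧ ord (fun t => P (γ t)) = k}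

/-- The multiplicity of a curve germ: the minimum of the orders of its
not-identically-zero coordinate functions. -/
noncomputable def multC {n : ℕ} (γ : ℝ → (Fin n → ℝ)) : ℕ :=
  sInf {k | ∃ i : Fin n, (¬ ∀ᶠ t in nhds (0 : ℝ), γ t i = 0) ∧ ord (fun t => γ t i) = k}

/-- `ord` only depends on the germ at `0`. -/
lemma ord_congr {f g : ℝ → ℝ} (h : f =ᶠ[𝓝 (0:ℝ)] g) : ord f = ord g := by
  unfold ord
  congr 1
  ext i
  simp only [Set.mem_setOf_eq, h.iteratedDeriv_eq i]

/-- `ord` equals the order of the power series of `f` at `0`. -/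
lemma ord_eq_series_order {f : ℝ → ℝ} {p : FormalMultilinearSeries ℝ ℝ ℝ}
    (hp : HasFPowerSeriesAt f p 0) : ord f = p.order := by
  have key : ∀ i : ℕ, iteratedDeriv i f 0 = (Nat.factorial i : ℝ) * p.coeff i := by
    intro i
    obtain ⟨r, hr⟩ := hp
    have h1 := hr.factorial_smul (1:ℝ) i
    rw [iteratedDeriv_eq_iteratedFDeriv, ← h1, nsmul_eq_mul]
    rfl
  unfold ord FormalMultilinearSeries.order
  congr 1
  ext i
  simp only [Set.mem_setOf_eq, key i, mul_ne_zero_iff, ne_eq, Nat.cast_eq_zero,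
    Nat.factorial_ne_zero, not_false_eq_true, true_and, ← FormalMultilinearSeries.coeff_eq_zero]

/-- If `f z = z ^ m * g z` near `0` with `g` analytic and nonvanishing at `0`,
then `ord f = m` and `f` is not identically zero near `0`. -/
lemma ord_eq_of_rep {f g : ℝ → ℝ} {m : ℕ} (hg : AnalyticAt ℝ g 0) (hg0 : g 0 ≠ 0)
    (heq : f =ᶠ[𝓝 (0:ℝ)] fun z => z ^ m * g z) :
    ord f = m ∧ ¬ ∀ᶠ z in 𝓝 (0:ℝ), f z = 0 := by
  have hf : AnalyticAt ℝ f 0 := by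
    have : AnalyticAt ℝ (fun z : ℝ => z ^ m * g z) 0 := ((analyticAt_id).pow m).mul hg
    exact this.congr heq.symm
  obtain ⟨p, hp⟩ := hf
  -- f is not eventually zero
  have hne : ¬ ∀ᶠ z in 𝓝 (0:ℝ), f z = 0 := by
    intro hev
    have hgne : ∀ᶠ z in 𝓝 (0:ℝ), g z ≠ 0 := hg.continuousAt.eventually_ne hg0
    have hall : ∀ᶠ z in 𝓝[≠] (0:ℝ), False := by
      rw [eventually_nhdsWithin_iff]
      filter_upwards [hev, heq, hgne] with z h1 h2 h3 hz
      rw [h1] at h2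
      have hzm : z ^ m = 0 := by
        rcases mul_eq_zero.mp h2.symm with h | h
        · exact h
        · exact absurd h h3
      exact hz (pow_eq_zero_iff' |>.mp hzm).1
    exact (hall.exists).elim (fun _ h => h)
  have hpne : p ≠ 0 := fun h0 => hne (hp.locally_zero_iff.mpr h0)
  have hordm : p.order = m := by
    apply AnalyticAt.unique_eventuallyEq_pow_smul_nonzero
      (f := f) (z₀ := (0:ℝ))
    · exact ⟨_, ⟨_, hp.has_fpower_series_iterate_dslope_fslope p.order⟩,
        hp.iterate_dslope_fslope_ne_zero hpne, by
          simpa using Filter.Eventually.of_forall (f := 𝓝 (0:ℝ)) hp.eq_pow_order_mul_iterate_dslope⟩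
    · exact ⟨g, hg, hg0, by filter_upwards [heq] with z hz; simpa [smul_eq_mul] using hz⟩
  exact ⟨(ord_eq_series_order hp).trans hordm, hne⟩

/-- Composition with an analytic reparametrization preserves `ord` and non-vanishing. -/
lemma ord_comp {f τ : ℝ → ℝ} (hf : AnalyticAt ℝ f 0)
    (hfne : ¬ ∀ᶠ t in 𝓝 (0:ℝ), f t = 0)
    (hτ : AnalyticAt ℝ τ 0) (hτ0 : τ 0 = 0) (hτ' : deriv τ 0 ≠ 0) :
    (¬ ∀ᶠ t in 𝓝 (0:ℝ), f (τ t) = 0) ∧ ord (fun t => f (τ t)) = ord f := by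
  obtain ⟨p, hp⟩ := id hf
  have hpne : p ≠ 0 := fun h0 => hfne (hp.locally_zero_iff.mpr h0)
  set m := p.order with hm
  set g : ℝ → ℝ := (Function.swap dslope 0)^[m] f with hgdef
  have hg : AnalyticAt ℝ g 0 := ⟨_, hp.has_fpower_series_iterate_dslope_fslope m⟩
  have hg0 : g 0 ≠ 0 := hp.iterate_dslope_fslope_ne_zero hpne
  have hfrep : f =ᶠ[𝓝 (0:ℝ)] fun z => z ^ m * g z := by
    filter_upwards [Filter.Eventually.of_forall (f := 𝓝 (0:ℝ)) hp.eq_pow_order_mul_iterate_dslope] with z hz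
    simpa [smul_eq_mul] using hz
  have hordf : ord f = m := (ord_eq_of_rep hg hg0 hfrep).1
  -- write τ t = t * u t
  set u : ℝ → ℝ := dslope τ 0 with hudef
  have hu : AnalyticAt ℝ u 0 := by
    obtain ⟨q, hq⟩ := id hτ
    exact ⟨_, hq.has_fpower_series_dslope_fslope⟩
  have hu0 : u 0 = deriv τ 0 := dslope_same τ 0
  have hτeq : ∀ t : ℝ, τ t = t * u t := by
    intro t
    have h := sub_smul_dslope τ 0 t
    simp only [sub_zero, hτ0, smul_eq_mul] at h
    rw [← h]
  have hτcont : Tendsto τ (𝓝 0) (𝓝 (0:ℝ)) := by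
    have := hτ.continuousAt.tendsto
    rwa [hτ0] at this
  have hrep2 : (fun t => f (τ t)) =ᶠ[𝓝 (0:ℝ)]
      fun t => t ^ m * (u t ^ m * g (τ t)) := by
    filter_upwards [hτcont.eventually hfrep] with t ht
    rw [ht, hτeq t, mul_pow]
    ring
  have hh : AnalyticAt ℝ (fun t => u t ^ m * g (τ t)) 0 := by
    refine (hu.pow m).mul ?_
    have hgτ : AnalyticAt ℝ g (τ 0) := by rwa [hτ0]
    exact hgτ.comp hτ
  have hh0 : (fun t => u t ^ m * g (τ t)) 0 ≠ 0 := by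
    simp only [hτ0, hu0]
    exact mul_ne_zero (pow_ne_zero m hτ') hg0
  obtain ⟨h1, h2⟩ := ord_eq_of_rep hh hh0 hrep2
  exact ⟨h2, h1.trans hordf.symm⟩

/-- Analytic inverse function theorem (local, finite-dimensional). -/
lemma exists_local_inverse {E : Type*} [NormedAddCommGroup E] [NormedSpace ℝ E]
    [FiniteDimensional ℝ E] {Φ : E → E}
    (hΦ : AnalyticAt ℝ Φ 0) (hΦ0 : Φ 0 = 0)
    (hbij : Function.Bijective (fderiv ℝ Φ 0)) :
    ∃ Ψ : E → E, AnalyticAt ℝ Ψ 0 ∧ Ψ 0 = 0 ∧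
      (∀ᶠ x in 𝓝 (0:E), Ψ (Φ x) = x) ∧ (∀ᶠ y in 𝓝 (0:E), Φ (Ψ y) = y) := by
  set le : E ≃ₗ[ℝ] E := LinearEquiv.ofBijective ((fderiv ℝ Φ 0) : E →ₗ[ℝ] E) hbij with hle
  set i : E ≃L[ℝ] E := le.toContinuousLinearEquiv with hi
  have hieq : (i : E →L[ℝ] E) = fderiv ℝ Φ 0 := by
    ext x; rfl
  have hstrict : HasStrictFDerivAt Φ (i : E →L[ℝ] E) 0 := by
    rw [hieq]; exact hΦ.hasStrictFDerivAt
  set F := hstrict.toOpenPartialHomeomorph Φ with hF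
  have hcoe : (F : E → E) = Φ := hstrict.toOpenPartialHomeomorph_coe
  have h0 : (0:E) ∈ F.source := hstrict.mem_toOpenPartialHomeomorph_source
  obtain ⟨p, hp⟩ := id hΦ
  have hpF : HasFPowerSeriesAt (F : E → E) p 0 := by rw [hcoe]; exact hp
  have hp1 : p 1 = (continuousMultilinearCurryFin1 ℝ E E).symm (i : E →L[ℝ] E) := by
    rw [hieq, hp.fderiv_eq]
    simp
  have hsymm := F.hasFPowerSeriesAt_symm h0 hpF hp1
  have hF0 : F 0 = 0 := by rw [congrFun hcoe 0, hΦ0]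
  have hFsymm0 : F.symm 0 = 0 := by
    conv_lhs => rw [← hF0]
    rw [F.left_inv h0]
  refine ⟨F.symm, ?_, hFsymm0, ?_, ?_⟩
  · rw [congrFun hcoe 0, hΦ0] at hsymm
    exact ⟨_, hsymm⟩
  · filter_upwards [F.open_source.mem_nhds h0] with x hx
    have h := F.left_inv hx
    rwa [congrFun hcoe x] at h
  · have hmem : (0:E) ∈ F.target := by rw [← hF0]; exact F.map_source h0
    have htarget : F.target ∈ 𝓝 (0:E) := F.open_target.mem_nhds hmem
    filter_upwards [htarget] with y hy
    have h := F.right_inv hy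
    rwa [congrFun hcoe (F.symm y)] at h

/-- One-sided inclusion of curve semigroups. -/
lemma curveSemigroup_subset {n : ℕ} {γ σ : ℝ → (Fin n → ℝ)}
    {Ψ : (Fin n → ℝ) → (Fin n → ℝ)} {τ : ℝ → ℝ}
    (hγa : AnalyticAt ℝ γ 0) (hγ0 : γ 0 = 0)
    (hΨ : AnalyticAt ℝ Ψ 0) (hΨ0 : Ψ 0 = 0)
    (hτ : AnalyticAt ℝ τ 0) (hτ0 : τ 0 = 0) (hτ' : deriv τ 0 ≠ 0)
    (heq : ∀ᶠ t in 𝓝 (0:ℝ), γ (τ t) = Ψ (σ t)) :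
    curveSemigroup γ ⊆ curveSemigroup σ := by
  rintro k ⟨P, hPa, hP0, hPne, hPord⟩
  have hfA : AnalyticAt ℝ (fun t => P (γ t)) 0 := by
    have : AnalyticAt ℝ P (γ 0) := by rwa [hγ0]
    exact this.comp hγa
  obtain ⟨hne', hord'⟩ := ord_comp hfA hPne hτ hτ0 hτ'
  refine ⟨fun x => P (Ψ x), ?_, by simp [hΨ0, hP0], ?_, ?_⟩
  · have : AnalyticAt ℝ P (Ψ 0) := by rwa [hΨ0]
    exact this.comp hΨ
  · intro hev
    apply hne'
    filter_upwards [hev, heq] with t h1 h2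
    rw [h2]; exact h1
  · have hcongr : (fun t => P (Ψ (σ t))) =ᶠ[𝓝 (0:ℝ)] fun t => P (γ (τ t)) := by
      filter_upwards [heq] with t ht
      rw [ht]
    rw [ord_congr hcongr, hord', hPord]

/-- The semigroup of a curve germ is an invariant of RL-equivalence. -/
theorem curveSemigroup_invariant_of_RLEquiv {n : ℕ} (γ σ : ℝ → (Fin n → ℝ))
    (hγa : AnalyticAt ℝ γ 0) (hγ0 : γ 0 = 0)
    (hσa : AnalyticAt ℝ σ 0) (hσ0 : σ 0 = 0)
    (hγnz : ¬ ∀ᶠ t in nhds (0 : ℝ), γ t = 0)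
    (hσnz : ¬ ∀ᶠ t in nhds (0 : ℝ), σ t = 0)
    (hγP : ∃ P : (Fin n → ℝ) → ℝ, AnalyticAt ℝ P 0 ∧ P 0 = 0 ∧
      ¬ ∀ᶠ t in nhds (0 : ℝ), P (γ t) = 0)
    (hσP : ∃ P : (Fin n → ℝ) → ℝ, AnalyticAt ℝ P 0 ∧ P 0 = 0 ∧
      ¬ ∀ᶠ t in nhds (0 : ℝ), P (σ t) = 0)
    (h : RLEquiv γ σ) :
    curveSemigroup γ = curveSemigroup σ := by
  
  obtain ⟨Φ, τ, hΦa, hΦ0, hΦbij, hτa, hτ0, hτ', hcomp⟩ := h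
  -- local analytic inverse of Φ
  obtain ⟨Ψ, hΨa, hΨ0, hΨl, hΨr⟩ := exists_local_inverse hΦa hΦ0 hΦbij
  -- local analytic inverse of τ
  have hτbij : Function.Bijective (fderiv ℝ τ 0) := by
    have hfd : ∀ x : ℝ, fderiv ℝ τ 0 x = x * deriv τ 0 := by
      intro x
      have h1 : fderiv ℝ τ 0 x = fderiv ℝ τ 0 (x • (1:ℝ)) := by simp
      rw [h1, (fderiv ℝ τ 0).map_smul, smul_eq_mul, fderiv_apply_one_eq_deriv]
    constructor
    · intro a b hab
      rw [hfd, hfd] at hab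
      exact mul_right_cancel₀ hτ' hab
    · intro y
      refine ⟨y / deriv τ 0, ?_⟩
      rw [hfd]
      field_simp
  obtain ⟨ρ, hρa, hρ0, hρl, hρr⟩ := exists_local_inverse hτa hτ0 hτbij
  have hρ' : deriv ρ 0 ≠ 0 := by
    have hev : (fun t => τ (ρ t)) =ᶠ[𝓝 (0:ℝ)] id := by
      filter_upwards [hρr] with t ht using ht
    have hd1 : deriv (fun t => τ (ρ t)) 0 = 1 := by
      rw [hev.deriv_eq]
      simp
    have hd2 : deriv (fun t => τ (ρ t)) 0 = deriv τ (ρ 0) * deriv ρ 0 := by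
      have hdτ : DifferentiableAt ℝ τ (ρ 0) := by rw [hρ0]; exact hτa.differentiableAt
      exact deriv_comp 0 hdτ hρa.differentiableAt
    rw [hd1, hρ0] at hd2
    intro h0
    rw [h0, mul_zero] at hd2
    exact one_ne_zero hd2
  have hτtend : Tendsto τ (𝓝 0) (𝓝 (0:ℝ)) := by
    have := hτa.continuousAt.tendsto; rwa [hτ0] at this
  have hρtend : Tendsto ρ (𝓝 0) (𝓝 (0:ℝ)) := by
    have := hρa.continuousAt.tendsto; rwa [hρ0] at this
  have hγtend : Tendsto γ (𝓝 0) (𝓝 (0 : Fin n → ℝ)) := by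
    have := hγa.continuousAt.tendsto; rwa [hγ0] at this
  apply Set.Subset.antisymm
  · -- S(γ) ⊆ S(σ)
    have heq1 : ∀ᶠ t in 𝓝 (0:ℝ), γ (τ t) = Ψ (σ t) := by
      filter_upwards [hcomp, (hγtend.comp hτtend).eventually hΨl] with t h1 h2
      rw [h1]
      exact h2.symm
    exact curveSemigroup_subset hγa hγ0 hΨa hΨ0 hτa hτ0 hτ' heq1
  · -- S(σ) ⊆ S(γ)
    have heq2 : ∀ᶠ t in 𝓝 (0:ℝ), σ (ρ t) = Φ (γ t) := by
      filter_upwards [hρtend.eventually hcomp, hρr] with t h1 h2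
      rw [h1, h2]
    exact curveSemigroup_subset hσa hσ0 hΦa hΦ0 hρa hρ0 hρ' heq2
end

section
/- The curve germs γ₁(t) = (t³, t⁵, t⁷) and γ₂(t) = (t³, t⁵, 0) in ℝ³ are not RL-equivalent. (These are the two inequivalent normal forms of curves realizing points of the class RVV at level three of the Monster tower.) -/
open Filter

open Asymptotics Topology

private lemma pow_isBigO_pow_aux {m n : ℕ} (h : n ≤ m) :
    (fun s : ℝ => s ^ m) =O[nhds (0:ℝ)] fun s => s ^ n := by
  rw [isBigO_iff]
  refine ⟨1, ?_⟩
  have h1 : ∀ᶠ s : ℝ in nhds 0, |s| ≤ 1 := by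
    filter_upwards [Metric.ball_mem_nhds (0:ℝ) one_pos] with s hs
    simp only [Metric.mem_ball, Real.dist_eq, sub_zero] at hs
    exact hs.le
  filter_upwards [h1] with s hs
  simp only [Real.norm_eq_abs, abs_pow, one_mul]
  exact pow_le_pow_of_le_one (abs_nonneg s) hs h

private lemma coeff_eq_zero_aux {c : ℝ} {k : ℕ}
    (h : (fun s : ℝ => c * s ^ k) =O[nhds (0:ℝ)] fun s => s ^ (k+1)) : c = 0 := by
  rcases h.bound with ⟨C, hC⟩
  have h1 : ∀ᶠ s in nhdsWithin (0:ℝ) {0}ᶜ, |c| ≤ C * |s| := by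
    filter_upwards [nhdsWithin_le_nhds hC, self_mem_nhdsWithin] with s hs hs0
    have hs0' : s ≠ 0 := hs0
    have hsk : 0 < |s| ^ k := pow_pos (abs_pos.2 hs0') k
    rw [Real.norm_eq_abs, Real.norm_eq_abs, pow_succ] at hs
    simp only [abs_mul, abs_pow] at hs
    have h2 : |c| * |s| ^ k ≤ (C * |s|) * |s| ^ k := by nlinarith [hs]
    exact le_of_mul_le_mul_right h2 hsk
  have h2 : Tendsto (fun s : ℝ => C * |s|) (nhdsWithin (0:ℝ) {0}ᶜ) (nhds 0) := by
    have h4 : Tendsto (fun s : ℝ => C * |s|) (nhds (0:ℝ)) (nhds (C * |(0:ℝ)|)) :=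
      ((continuous_const.mul continuous_abs).tendsto (0:ℝ))
    simp only [abs_zero, mul_zero] at h4
    exact h4.mono_left nhdsWithin_le_nhds
  have h3 : |c| ≤ 0 := ge_of_tendsto h2 h1
  exact abs_eq_zero.mp (le_antisymm h3 (abs_nonneg c))

/-- The curves `(t³, t⁵, t⁷)` and `(t³, t⁵, 0)` are not RL-equivalent. -/
theorem not_RLEquiv_t3_t5_t7_and_t3_t5_0 :
    ¬ RLEquiv (fun t : ℝ => ![t ^ 3, t ^ 5, t ^ 7])
      (fun t : ℝ => ![t ^ 3, t ^ 5, 0]) := by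
  rintro ⟨Φ, τ, hΦ, hΦ0, hbij, hτ, hτ0, hτ', heq⟩
  set γ : ℝ → Fin 3 → ℝ := fun t => ![t ^ 3, t ^ 5, t ^ 7] with hγdef
  -- τ maps 𝓝 0 onto 𝓝 0
  have hτs : HasStrictDerivAt τ (deriv τ 0) 0 := hτ.contDiffAt.hasStrictDerivAt one_ne_zero
  have hmap : map τ (nhds 0) = nhds (τ 0) := hτs.map_nhds_eq hτ'
  rw [hτ0] at hmap
  -- the third coordinate of Φ vanishes on the curve γ near 0
  have hψ : ∀ᶠ s in nhds (0:ℝ), Φ (γ s) 2 = 0 := by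
    rw [← hmap, eventually_map]
    filter_upwards [heq] with t ht
    have h2 := congrFun ht 2
    simp only [Matrix.cons_val_two, Matrix.tail_cons, Matrix.head_cons] at h2
    exact h2.symm
  -- the third coordinate of Φ as an analytic function
  have hf : AnalyticAt ℝ (fun x : Fin 3 → ℝ => Φ x 2) 0 := by
    have hproj : AnalyticAt ℝ (ContinuousLinearMap.proj (R := ℝ)
        (φ := fun _ : Fin 3 => ℝ) 2) (Φ 0) :=
      (ContinuousLinearMap.proj (R := ℝ) (φ := fun _ : Fin 3 => ℝ) 2).analyticAt (Φ 0)
    exact hproj.comp hΦ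
  obtain ⟨p, hp⟩ := hf
  -- the curve tends to 0
  have hγ0 : γ 0 = 0 := by
    funext i
    fin_cases i <;> simp [γ]
  have hγt : Tendsto γ (nhds 0) (nhds 0) := by
    rw [tendsto_pi_nhds]
    intro i
    have hpow : ∀ k : ℕ, k ≠ 0 → Tendsto (fun t : ℝ => t ^ k) (nhds 0) (nhds 0) := by
      intro k hk
      have := (continuous_pow k).tendsto (0:ℝ)
      rwa [zero_pow hk] at this
    fin_cases i <;> simpa [γ] using hpow _ (by norm_num)
  -- Taylor remainder estimate, composed with the curve
  have hE : (fun s : ℝ => Φ (γ s) 2 - p.partialSum 3 (γ s))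
      =O[nhds 0] fun s => ‖γ s‖ ^ 3 := by
    have h1 := hp.isBigO_sub_partialSum_pow 3
    simp only [zero_add] at h1
    exact h1.comp_tendsto hγt
  have hnorm : (fun s : ℝ => ‖γ s‖ ^ 3) =O[nhds 0] fun s : ℝ => s ^ 8 := by
    rw [isBigO_iff]
    refine ⟨1, ?_⟩
    have h1 : ∀ᶠ s : ℝ in nhds 0, |s| ≤ 1 := by
      filter_upwards [Metric.ball_mem_nhds (0:ℝ) one_pos] with s hs
      simp only [Metric.mem_ball, Real.dist_eq, sub_zero] at hs
      exact hs.le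
    filter_upwards [h1] with s hs
    have hγn : ‖γ s‖ ≤ |s| ^ 3 := by
      rw [pi_norm_le_iff_of_nonneg (by positivity)]
      intro i
      fin_cases i <;>
        simpa [γ, Real.norm_eq_abs, abs_pow] using
          pow_le_pow_of_le_one (abs_nonneg s) hs (by norm_num)
    have h2 : ‖γ s‖ ^ 3 ≤ (|s| ^ 3) ^ 3 := pow_le_pow_left₀ (norm_nonneg _) hγn 3
    have h3 : (|s| ^ 3 : ℝ) ^ 3 = |s| ^ 9 := by ring
    have h4 : |s| ^ 9 ≤ |s| ^ 8 := pow_le_pow_of_le_one (abs_nonneg s) hs (by norm_num)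
    rw [Real.norm_eq_abs, Real.norm_eq_abs, abs_pow, abs_pow,
      abs_of_nonneg (norm_nonneg (γ s)), one_mul]
    exact h2.trans (h3 ▸ h4)
  have hE8 : (fun s : ℝ => Φ (γ s) 2 - p.partialSum 3 (γ s)) =O[nhds 0]
      fun s : ℝ => s ^ 8 := hE.trans hnorm
  -- the linearization of the third coordinate of Φ
  set L : (Fin 3 → ℝ) →L[ℝ] ℝ :=
    (ContinuousLinearMap.proj (R := ℝ) (φ := fun _ : Fin 3 => ℝ) 2).comp
      (fderiv ℝ Φ 0) with hLdef
  have hΦd : HasFDerivAt Φ (fderiv ℝ Φ 0) 0 := hΦ.differentiableAt.hasFDerivAt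
  have hcomp : HasFDerivAt (fun x : Fin 3 → ℝ => Φ x 2) L 0 := by
    have h1 := ((ContinuousLinearMap.proj (R := ℝ) (φ := fun _ : Fin 3 => ℝ)
      (2 : Fin 3)).hasFDerivAt (x := Φ 0)).comp 0 hΦd
    exact h1
  have hL1 : L = continuousMultilinearCurryFin1 ℝ (Fin 3 → ℝ) ℝ (p 1) :=
    hcomp.unique hp.hasFDerivAt
  have hLy : ∀ y : Fin 3 → ℝ, L y = p 1 (fun _ => y) := by
    intro y
    rw [hL1]
    rw [continuousMultilinearCurryFin1_apply]
    congr 1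
  have hps : ∀ y : Fin 3 → ℝ,
      p.partialSum 3 y - p.partialSum 3 (-y) = 2 * p 1 (fun _ => y) := by
    intro y
    have hneg : ∀ k : ℕ, (p k fun _ : Fin k => -y) = (-1:ℝ)^k • p k fun _ => y := by
      intro k
      have h1 := (p k).map_smul_univ (fun _ : Fin k => (-1:ℝ)) (fun _ => y)
      simpa [neg_one_smul] using h1
    simp only [FormalMultilinearSeries.partialSum, Finset.sum_range_succ,
      Finset.sum_range_zero, hneg, smul_eq_mul]
    ring
  have hEneg : (fun s : ℝ => Φ (γ (-s)) 2 - p.partialSum 3 (γ (-s))) =O[nhds 0]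
      fun s : ℝ => s ^ 8 := by
    have hneg : Tendsto (fun s : ℝ => -s) (nhds 0) (nhds 0) := by
      simpa using (continuous_neg (G := ℝ)).tendsto 0
    have := hE8.comp_tendsto hneg
    refine this.trans ?_
    apply Filter.EventuallyEq.isBigO
    filter_upwards with s
    show (-s : ℝ) ^ 8 = s ^ 8
    ring
  -- the curve is odd
  have hγneg : ∀ s : ℝ, γ (-s) = -γ s := by
    intro s
    funext i
    fin_cases i <;> simp [γ] <;> ring
  -- hence the linear part of Φ₂ along the curve is very flat
  have hψneg : ∀ᶠ s in nhds (0:ℝ), Φ (γ (-s)) 2 = 0 := by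
    have hneg : Tendsto (fun s : ℝ => -s) (nhds (0:ℝ)) (nhds 0) := by
      simpa using (continuous_neg (G := ℝ)).tendsto 0
    exact hneg.eventually hψ
  have key : (fun s : ℝ => 2 * L (γ s)) =ᶠ[nhds 0]
      fun s : ℝ => (Φ (γ (-s)) 2 - p.partialSum 3 (γ (-s))) -
        (Φ (γ s) 2 - p.partialSum 3 (γ s)) := by
    filter_upwards [hψ, hψneg] with s h1 h2
    rw [h1, h2, hγneg s, zero_sub, zero_sub, hLy (γ s), ← hps (γ s)]
    ring
  have hLγ : (fun s : ℝ => 2 * L (γ s)) =O[nhds 0] fun s : ℝ => s ^ 8 :=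
    key.trans_isBigO (hEneg.sub hE8)
  -- expand L along the curve
  set e₀ : Fin 3 → ℝ := ![1, 0, 0] with he₀
  set e₁ : Fin 3 → ℝ := ![0, 1, 0] with he₁
  set e₂ : Fin 3 → ℝ := ![0, 0, 1] with he₂
  have hexp : ∀ s : ℝ, L (γ s) = L e₀ * s ^ 3 + L e₁ * s ^ 5 + L e₂ * s ^ 7 := by
    intro s
    have hg : γ s = s ^ 3 • e₀ + s ^ 5 • e₁ + s ^ 7 • e₂ := by
      funext i
      fin_cases i <;> simp [γ, e₀, e₁, e₂]
    rw [hg, map_add, map_add, map_smul, map_smul, map_smul, smul_eq_mul,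
      smul_eq_mul, smul_eq_mul]
    ring
  -- extract the coefficients one by one
  have hA0 : L e₀ = 0 := by
    apply coeff_eq_zero_aux (k := 3)
    have h1 : (fun s : ℝ => L e₀ * s ^ 3) =
        fun s : ℝ => (1/2 : ℝ) * (2 * L (γ s)) - (L e₁ * s ^ 5 + L e₂ * s ^ 7) := by
      funext s
      rw [hexp s]; ring
    rw [h1]
    exact ((hLγ.const_mul_left (1/2)).trans
        (pow_isBigO_pow_aux (m := 8) (n := 3+1) (by norm_num))).sub
      (((pow_isBigO_pow_aux (by norm_num : 3+1 ≤ 5)).const_mul_left (L e₁)).add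
        ((pow_isBigO_pow_aux (by norm_num : 3+1 ≤ 7)).const_mul_left (L e₂)))
  have hA1 : L e₁ = 0 := by
    apply coeff_eq_zero_aux (k := 5)
    have h1 : (fun s : ℝ => L e₁ * s ^ 5) =
        fun s : ℝ => (1/2 : ℝ) * (2 * L (γ s)) - L e₂ * s ^ 7 := by
      funext s
      rw [hexp s, hA0]; ring
    rw [h1]
    exact ((hLγ.const_mul_left (1/2)).trans
        (pow_isBigO_pow_aux (m := 8) (n := 5+1) (by norm_num))).sub
      ((pow_isBigO_pow_aux (by norm_num : 5+1 ≤ 7)).const_mul_left (L e₂))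
  have hA2 : L e₂ = 0 := by
    apply coeff_eq_zero_aux (k := 7)
    have h1 : (fun s : ℝ => L e₂ * s ^ 7) =
        fun s : ℝ => (1/2 : ℝ) * (2 * L (γ s)) := by
      funext s
      rw [hexp s, hA0, hA1]; ring
    rw [h1]
    exact (hLγ.const_mul_left (1/2)).trans
      (pow_isBigO_pow_aux (m := 8) (n := 7+1) (by norm_num))
  -- but then the differential of Φ at 0 is not surjective
  have hLzero : ∀ v : Fin 3 → ℝ, L v = 0 := by
    intro v
    have hv : v = v 0 • e₀ + v 1 • e₁ + v 2 • e₂ := by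
      funext i
      fin_cases i <;> simp [e₀, e₁, e₂]
    rw [hv, map_add, map_add, map_smul, map_smul, map_smul, hA0, hA1, hA2]
    simp
  obtain ⟨v, hv⟩ := hbij.surjective (Pi.single 2 1)
  have h1 : L v = fderiv ℝ Φ 0 v 2 := rfl
  rw [hLzero v, hv] at h1
  simp [Pi.single] at h1
end

section
/- The curve γ₁(t) = (t³, t⁵, t⁷) does not lie in any embedded analytic surface germ through the origin in ℝ³: there is no real-analytic function f defined on a neighborhood of 0 in ℝ³ with f(0) = 0 and nonzero gradient ∇f(0) ≠ 0 such that f(t³, t⁵, t⁷) = 0 for all t in a neighborhood of 0. In particular, γ₁ is not a planar curve germ. -/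
open Filter Topology

open Asymptotics in
private lemma aux_limit_zero {φ : ℝ → ℝ} {a : ℝ} (hc : Filter.Tendsto φ (nhds 0) (nhds a))
    {n : ℕ} (h : (fun t => t ^ n * φ t) =o[nhds (0 : ℝ)] fun t => t ^ n) : a = 0 := by
  have h1 : Filter.Tendsto (fun t => t ^ n * φ t / t ^ n) (𝓝[≠] (0:ℝ)) (nhds 0) :=
    (h.tendsto_div_nhds_zero).mono_left nhdsWithin_le_nhds
  have h2 : Filter.Tendsto φ (𝓝[≠] (0:ℝ)) (nhds a) := hc.mono_left nhdsWithin_le_nhds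
  have h3 : ∀ᶠ t in 𝓝[≠] (0:ℝ), t ^ n * φ t / t ^ n = φ t := by
    filter_upwards [self_mem_nhdsWithin] with t ht
    rw [mul_div_cancel_left₀ _ (pow_ne_zero n ht)]
  have h4 : Filter.Tendsto φ (𝓝[≠] (0:ℝ)) (nhds 0) := h1.congr' h3
  exact tendsto_nhds_unique h2 h4

/-- The curve `(t³, t⁵, t⁷)` does not lie in any embedded analytic surface germ
through the origin in `ℝ³`. -/
theorem t3_t5_t7_not_planar :
    ¬ ∃ f : (Fin 3 → ℝ) → ℝ, AnalyticAt ℝ f 0 ∧ f 0 = 0 ∧ fderiv ℝ f 0 ≠ 0 ∧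
      ∀ᶠ t in nhds (0 : ℝ), f ![t ^ 3, t ^ 5, t ^ 7] = 0 := by
  rintro ⟨f, hf, hf0, hL, hcurve⟩
  obtain ⟨p, hp⟩ := hf
  set L := fderiv ℝ f 0 with hLdef
  set γ : ℝ → (Fin 3 → ℝ) := fun t => ![t ^ 3, t ^ 5, t ^ 7] with hγ
  have hγ0 : γ 0 = 0 := by
    funext i; fin_cases i <;> simp [hγ]
  have hγcont : Continuous γ := by
    apply continuous_pi
    intro i; fin_cases i <;> simp [hγ] <;> fun_prop
  have hγtend : Filter.Tendsto γ (nhds 0) (nhds 0) := by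
    simpa [hγ0] using hγcont.tendsto 0
  have hγneg : ∀ t : ℝ, γ (-t) = -γ t := by
    intro t; funext i; fin_cases i <;> simp [hγ] <;> ring
  -- the key values a, b, c
  set e : Fin 3 → (Fin 3 → ℝ) := fun i => Pi.single i 1 with he
  set a := L (e 0) with ha; set b := L (e 1) with hb; set c := L (e 2) with hc
  have hγdecomp : ∀ t : ℝ, γ t = t ^ 3 • e 0 + t ^ 5 • e 1 + t ^ 7 • e 2 := by
    intro t; funext i; fin_cases i <;> simp [hγ, he, Pi.single_apply]
  have hLγ : ∀ t : ℝ, L (γ t) = a * t ^ 3 + b * t ^ 5 + c * t ^ 7 := by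
    intro t
    rw [hγdecomp t, map_add, map_add, map_smul, map_smul, map_smul]
    simp [ha, hb, hc, smul_eq_mul]; ring
  -- Big-O of f minus third partial sum
  have hbigO := hp.isBigO_sub_partialSum_pow 3
  simp only [zero_add] at hbigO
  -- compose with γ and -γ
  have h1 : (fun t => f (γ t) - p.partialSum 3 (γ t)) =O[nhds (0:ℝ)]
      fun t => ‖γ t‖ ^ 3 := hbigO.comp_tendsto hγtend
  have hγnegtend : Filter.Tendsto (fun t => -γ t) (nhds (0:ℝ)) (nhds 0) := by
    simpa using hγtend.neg
  have h2 : (fun t => f (-γ t) - p.partialSum 3 (-γ t)) =O[nhds (0:ℝ)]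
      fun t => ‖-γ t‖ ^ 3 := hbigO.comp_tendsto hγnegtend
  simp only [norm_neg] at h2
  -- ‖γ t‖ ^ 3 is O(t^9)
  have hnorm : (fun t => ‖γ t‖ ^ 3) =O[nhds (0:ℝ)] fun t => t ^ 9 := by
    rw [Asymptotics.isBigO_iff]
    refine ⟨1, ?_⟩
    have : ∀ᶠ t : ℝ in nhds 0, |t| ≤ 1 := by
      have : Filter.Tendsto (fun t : ℝ => |t|) (nhds 0) (nhds 0) := by
        simpa using continuous_abs.tendsto (0:ℝ)
      exact this.eventually_le_const (by norm_num)
    filter_upwards [this] with t ht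
    have hbound : ‖γ t‖ ≤ |t| ^ 3 := by
      rw [pi_norm_le_iff_of_nonneg (by positivity)]
      intro i
      fin_cases i
      · simp [hγ, abs_pow]
      · simpa [hγ, abs_pow] using pow_le_pow_of_le_one (abs_nonneg t) ht (by norm_num : 3 ≤ 5)
      · simpa [hγ, abs_pow] using pow_le_pow_of_le_one (abs_nonneg t) ht (by norm_num : 3 ≤ 7)
    calc ‖‖γ t‖ ^ 3‖ = ‖γ t‖ ^ 3 := by
            rw [Real.norm_of_nonneg (by positivity)]
      _ ≤ (|t| ^ 3) ^ 3 := pow_le_pow_left₀ (norm_nonneg _) hbound 3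
      _ = |t ^ 9| := by rw [← pow_mul, abs_pow]
      _ = 1 * ‖t ^ 9‖ := by rw [one_mul, Real.norm_eq_abs]
  have h1' : (fun t => f (γ t) - p.partialSum 3 (γ t)) =O[nhds (0:ℝ)] fun t => t ^ 9 :=
    h1.trans hnorm
  have h2' : (fun t => f (-γ t) - p.partialSum 3 (-γ t)) =O[nhds (0:ℝ)] fun t => t ^ 9 :=
    h2.trans hnorm
  -- f ∘ γ and f ∘ (-γ) vanish eventually
  have hz1 : ∀ᶠ t in nhds (0:ℝ), f (γ t) = 0 := hcurve
  have hz2 : ∀ᶠ t in nhds (0:ℝ), f (-γ t) = 0 := by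
    have hnegt : Filter.Tendsto (fun t : ℝ => -t) (nhds 0) (nhds 0) := by
      simpa using (continuous_neg (G := ℝ)).tendsto 0
    filter_upwards [hnegt.eventually hcurve] with t ht
    rw [← hγneg t]; exact ht
  -- hence partial sums along ±γ are O(t^9)
  have h3 : (fun t => p.partialSum 3 (γ t)) =O[nhds (0:ℝ)] fun t => t ^ 9 := by
    refine Asymptotics.IsBigO.congr' (h1'.neg_left) ?_ (by rfl)
    filter_upwards [hz1] with t ht; rw [ht]; ring
  have h4 : (fun t => p.partialSum 3 (-γ t)) =O[nhds (0:ℝ)] fun t => t ^ 9 := by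
    refine Asymptotics.IsBigO.congr' (h2'.neg_left) ?_ (by rfl)
    filter_upwards [hz2] with t ht; rw [ht]; ring
  -- the odd part of the partial sum is 2 L(y)
  have hodd : ∀ y : Fin 3 → ℝ, p.partialSum 3 y - p.partialSum 3 (-y) =
      2 * L y := by
    intro y
    have hL1 : L y = p 1 (fun _ => y) := by
      rw [hLdef, hp.fderiv_eq]
      simp only [continuousMultilinearCurryFin1_apply]
      congr 1
    have hneg : ∀ k : ℕ, (p k) (fun _ => -y) = (-1 : ℝ) ^ k • (p k) (fun _ => y) := by
      intro k
      have := (p k).map_smul_univ (fun _ : Fin k => (-1 : ℝ)) (fun _ => y)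
      simpa using this
    simp only [FormalMultilinearSeries.partialSum, Finset.sum_range_succ,
      Finset.sum_range_zero, hneg, hL1]
    ring_nf
  -- conclude L(γ t) = O(t^9)
  have h5 : (fun t => L (γ t)) =O[nhds (0:ℝ)] fun t => t ^ 9 := by
    have := (h3.sub h4).const_mul_left (1/2 : ℝ)
    refine this.congr' ?_ (by rfl)
    filter_upwards with t
    rw [hodd (γ t)]; ring
  have hA : (fun t => a * t ^ 3 + b * t ^ 5 + c * t ^ 7) =O[nhds (0:ℝ)] fun t => t ^ 9 := by
    refine h5.congr' ?_ (by rfl)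
    filter_upwards with t; rw [hLγ t]
  -- now extract a = 0, b = 0, c = 0
  have ha0 : a = 0 := by
    refine aux_limit_zero (φ := fun t => a + b * t ^ 2 + c * t ^ 4) ?_ (n := 3) ?_
    · have : Filter.Tendsto (fun t : ℝ => a + b * t ^ 2 + c * t ^ 4) (nhds 0)
        (nhds (a + b * 0 ^ 2 + c * 0 ^ 4)) :=
        ((continuous_const.add (continuous_const.mul (continuous_pow 2))).add
          (continuous_const.mul (continuous_pow 4))).tendsto 0
      simpa using this
    · have hlo := hA.trans_isLittleO
        (Asymptotics.isLittleO_pow_pow (by norm_num : 3 < 9))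
      exact hlo.congr' (by filter_upwards with t; ring) (by rfl)
  have hb0 : b = 0 := by
    refine aux_limit_zero (φ := fun t => b + c * t ^ 2) ?_ (n := 5) ?_
    · have : Filter.Tendsto (fun t : ℝ => b + c * t ^ 2) (nhds 0)
        (nhds (b + c * 0 ^ 2)) :=
        (continuous_const.add (continuous_const.mul (continuous_pow 2))).tendsto 0
      simpa using this
    · have hlo := hA.trans_isLittleO
        (Asymptotics.isLittleO_pow_pow (by norm_num : 5 < 9))
      exact hlo.congr' (by filter_upwards with t; rw [ha0]; ring) (by rfl)
  have hc0 : c = 0 := by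
    refine aux_limit_zero (φ := fun t => (c : ℝ)) tendsto_const_nhds (n := 7) ?_
    have hlo := hA.trans_isLittleO
      (Asymptotics.isLittleO_pow_pow (by norm_num : 7 < 9))
    exact hlo.congr' (by filter_upwards with t; rw [ha0, hb0]; ring) (by rfl)
  -- derive contradiction: L = 0
  apply hL
  ext v
  have hv : v = v 0 • e 0 + v 1 • e 1 + v 2 • e 2 := by
    funext i; fin_cases i <;> simp [he, Pi.single_apply]
  rw [hv]
  simp only [map_add, map_smul]
  rw [← ha, ← hb, ← hc, ha0, hb0, hc0]
  simp
end

section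
/- For every real number α, the curve germ t ↦ (t³ + αt⁴, t⁵, t⁷) in ℝ³ is RL-equivalent to the curve germ t ↦ (t³, t⁵, t⁷). -/
open Filter

namespace RLaux

noncomputable def prj (i : Fin 3) : (Fin 3 → ℝ) →L[ℝ] ℝ :=
  ContinuousLinearMap.proj (R := ℝ) (φ := fun _ : Fin 3 => ℝ) i

noncomputable def p1 (α : ℝ) (v : Fin 3 → ℝ) : ℝ :=
  v 0 + 2/3*α^2 * v 1 - 5/9*α^4 * v 2 - 5/9*α^3 * (v 0 * v 0)
noncomputable def q1 (α : ℝ) (v : Fin 3 → ℝ) : ℝ :=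
  1 - 25/27*α^3 * v 0 + 73/81*α^5 * v 1 - 40/243*α^7 * v 2 + 5/243*α^6 * (v 0 * v 0)
noncomputable def p2 (α : ℝ) (v : Fin 3 → ℝ) : ℝ :=
  v 1 - 5/3*α^2 * v 2 + 5/3*α * (v 0 * v 0) - 10/9*α^3 * (v 0 * v 1) - 37/36*α^5 * (v 1 * v 1)
noncomputable def q2 (α : ℝ) (v : Fin 3 → ℝ) : ℝ :=
  1 - 20/27*α^3 * v 0 + 299/324*α^5 * v 1 - 350/243*α^7 * v 2 + 1075/2916*α^6 * (v 0 * v 0)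
    - 515/8748*α^8 * (v 0 * v 1) + 37/8748*α^10 * (v 1 * v 1)
noncomputable def p3 (α : ℝ) (v : Fin 3 → ℝ) : ℝ :=
  v 2 + 7/3*α * (v 0 * v 1) + 7/9*α^2 * (v 0 * v 0 * v 0) + 17717/13635*α^3 * (v 1 * v 1)
    - 2335/2727*α^3 * (v 0 * v 2)
noncomputable def q3 (α : ℝ) (v : Fin 3 → ℝ) : ℝ :=
  1 - 169/505*α^3 * v 0 + 28574/40905*α^5 * v 1 + 60944/24543*α^7 * v 2
    - 20006/24543*α^6 * (v 0 * v 0) + 258461/1104435*α^8 * (v 0 * v 1)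
    - 7/19683*α^9 * (v 0 * v 0 * v 0) - 1821827/29819745*α^10 * (v 1 * v 1)
    + 46876/5963949*α^10 * (v 0 * v 2)

noncomputable def Phi (α : ℝ) (v : Fin 3 → ℝ) : Fin 3 → ℝ :=
  ![p1 α v / q1 α v, p2 α v / q2 α v, p3 α v / q3 α v]

noncomputable def tau (α : ℝ) (t : ℝ) : ℝ := t / (1 + α/3 * t)

lemma p10 (α : ℝ) : p1 α 0 = 0 := by simp [p1]
lemma p20 (α : ℝ) : p2 α 0 = 0 := by simp [p2]
lemma p30 (α : ℝ) : p3 α 0 = 0 := by simp [p3]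
lemma q10 (α : ℝ) : q1 α 0 = 1 := by simp [q1]
lemma q20 (α : ℝ) : q2 α 0 = 1 := by simp [q2]
lemma q30 (α : ℝ) : q3 α 0 = 1 := by simp [q3]

lemma anc (i : Fin 3) : AnalyticAt ℝ (fun v : Fin 3 → ℝ => v i) 0 := (prj i).analyticAt 0

lemma an_p1 (α : ℝ) : AnalyticAt ℝ (p1 α) 0 := by
  unfold p1
  exact (((anc 0).add (analyticAt_const.mul (anc 1))).sub
    (analyticAt_const.mul (anc 2))).sub (analyticAt_const.mul ((anc 0).mul (anc 0)))
lemma an_q1 (α : ℝ) : AnalyticAt ℝ (q1 α) 0 := by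
  unfold q1
  exact ((((analyticAt_const.sub (analyticAt_const.mul (anc 0))).add
    (analyticAt_const.mul (anc 1))).sub (analyticAt_const.mul (anc 2))).add
    (analyticAt_const.mul ((anc 0).mul (anc 0))))
lemma an_p2 (α : ℝ) : AnalyticAt ℝ (p2 α) 0 := by
  unfold p2
  exact ((((anc 1).sub (analyticAt_const.mul (anc 2))).add
    (analyticAt_const.mul ((anc 0).mul (anc 0)))).sub
    (analyticAt_const.mul ((anc 0).mul (anc 1)))).sub
    (analyticAt_const.mul ((anc 1).mul (anc 1)))
lemma an_q2 (α : ℝ) : AnalyticAt ℝ (q2 α) 0 := by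
  unfold q2
  exact ((((((analyticAt_const.sub (analyticAt_const.mul (anc 0))).add
    (analyticAt_const.mul (anc 1))).sub (analyticAt_const.mul (anc 2))).add
    (analyticAt_const.mul ((anc 0).mul (anc 0)))).sub
    (analyticAt_const.mul ((anc 0).mul (anc 1)))).add
    (analyticAt_const.mul ((anc 1).mul (anc 1))))
lemma an_p3 (α : ℝ) : AnalyticAt ℝ (p3 α) 0 := by
  unfold p3
  exact ((((anc 2).add (analyticAt_const.mul ((anc 0).mul (anc 1)))).add
    (analyticAt_const.mul (((anc 0).mul (anc 0)).mul (anc 0)))).add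
    (analyticAt_const.mul ((anc 1).mul (anc 1)))).sub
    (analyticAt_const.mul ((anc 0).mul (anc 2)))
lemma an_q3 (α : ℝ) : AnalyticAt ℝ (q3 α) 0 := by
  unfold q3
  exact ((((((((analyticAt_const.sub (analyticAt_const.mul (anc 0))).add
    (analyticAt_const.mul (anc 1))).add (analyticAt_const.mul (anc 2))).sub
    (analyticAt_const.mul ((anc 0).mul (anc 0)))).add
    (analyticAt_const.mul ((anc 0).mul (anc 1)))).sub
    (analyticAt_const.mul (((anc 0).mul (anc 0)).mul (anc 0)))).sub
    (analyticAt_const.mul ((anc 1).mul (anc 1)))).add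
    (analyticAt_const.mul ((anc 0).mul (anc 2))))

lemma an_Phi (α : ℝ) : AnalyticAt ℝ (Phi α) 0 := by
  apply AnalyticAt.pi
  intro i
  fin_cases i
  · simpa [Phi, Pi.div_def] using (an_p1 α).div (an_q1 α) (by rw [q10]; norm_num)
  · simpa [Phi, Pi.div_def] using (an_p2 α).div (an_q2 α) (by rw [q20]; norm_num)
  · simpa [Phi, Pi.div_def] using (an_p3 α).div (an_q3 α) (by rw [q30]; norm_num)

lemma Phi0 (α : ℝ) : Phi α 0 = 0 := by
  funext i
  fin_cases i <;> simp [Phi, p1, p2, p3]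

noncomputable def L1 (α : ℝ) : (Fin 3 → ℝ) →L[ℝ] ℝ :=
  prj 0 + (2/3*α^2) • prj 1 - (5/9*α^4) • prj 2
noncomputable def L2 (α : ℝ) : (Fin 3 → ℝ) →L[ℝ] ℝ :=
  prj 1 - (5/3*α^2) • prj 2
noncomputable def L3 : (Fin 3 → ℝ) →L[ℝ] ℝ := prj 2
noncomputable def L (α : ℝ) : (Fin 3 → ℝ) →L[ℝ] (Fin 3 → ℝ) :=
  ContinuousLinearMap.pi ![L1 α, L2 α, L3]

lemma mulz {f g : (Fin 3 → ℝ) → ℝ} (hf : DifferentiableAt ℝ f 0) (hg : DifferentiableAt ℝ g 0)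
    (hf0 : f 0 = 0) (hg0 : g 0 = 0) :
    HasFDerivAt (fun v => f v * g v) (0 : (Fin 3 → ℝ) →L[ℝ] ℝ) 0 := by
  simpa [hf0, hg0, Pi.mul_def] using hf.hasFDerivAt.mul hg.hasFDerivAt

lemma hc (i : Fin 3) : HasFDerivAt (fun v : Fin 3 → ℝ => v i) (prj i) 0 :=
  hasFDerivAt_apply (𝕜 := ℝ) i 0
lemma dc (i : Fin 3) : DifferentiableAt ℝ (fun v : Fin 3 → ℝ => v i) 0 := (hc i).differentiableAt

lemma hder_p1 (α : ℝ) : HasFDerivAt (p1 α) (L1 α) 0 := by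
  have h := (((hc 0).add ((hc 1).const_mul (2/3*α^2))).sub ((hc 2).const_mul (5/9*α^4))).sub
    ((mulz (dc 0) (dc 0) rfl rfl).const_mul (5/9*α^3))
  refine HasFDerivAt.congr_fderiv h ?_
  ext v
  simp [L1, prj]

lemma hder_p2 (α : ℝ) : HasFDerivAt (p2 α) (L2 α) 0 := by
  have h := (((((hc 1).sub ((hc 2).const_mul (5/3*α^2))).add
    ((mulz (dc 0) (dc 0) rfl rfl).const_mul (5/3*α))).sub
    ((mulz (dc 0) (dc 1) rfl rfl).const_mul (10/9*α^3))).sub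
    ((mulz (dc 1) (dc 1) rfl rfl).const_mul (37/36*α^5)))
  refine HasFDerivAt.congr_fderiv h ?_
  ext v
  simp [L2, prj]

lemma hder_p3 (α : ℝ) : HasFDerivAt (p3 α) L3 0 := by
  have h := (((((hc 2).add ((mulz (dc 0) (dc 1) rfl rfl).const_mul (7/3*α))).add
    ((mulz ((dc 0).mul (dc 0)) (dc 0) (by simp) rfl).const_mul (7/9*α^2))).add
    ((mulz (dc 1) (dc 1) rfl rfl).const_mul (17717/13635*α^3))).sub
    ((mulz (dc 0) (dc 2) rfl rfl).const_mul (2335/2727*α^3)))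
  refine HasFDerivAt.congr_fderiv h ?_
  ext v
  simp [L3, prj]

lemma dq1 (α : ℝ) : DifferentiableAt ℝ (q1 α) 0 := by unfold q1; fun_prop
lemma dq2 (α : ℝ) : DifferentiableAt ℝ (q2 α) 0 := by unfold q2; fun_prop
lemma dq3 (α : ℝ) : DifferentiableAt ℝ (q3 α) 0 := by unfold q3; fun_prop

lemma hd1 (α : ℝ) : HasFDerivAt (fun v => p1 α v / q1 α v) (L1 α) 0 := by
  have hinv : HasFDerivAt (fun v => (q1 α v)⁻¹) (fderiv ℝ (fun v => (q1 α v)⁻¹) 0) 0 :=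
    ((dq1 α).inv (by rw [q10]; norm_num)).hasFDerivAt
  have h := (hder_p1 α).mul hinv
  simpa only [Pi.mul_def, ← div_eq_mul_inv, p10, q10, zero_smul, inv_one, one_smul, add_zero, zero_add] using h
lemma hd2 (α : ℝ) : HasFDerivAt (fun v => p2 α v / q2 α v) (L2 α) 0 := by
  have hinv : HasFDerivAt (fun v => (q2 α v)⁻¹) (fderiv ℝ (fun v => (q2 α v)⁻¹) 0) 0 :=
    ((dq2 α).inv (by rw [q20]; norm_num)).hasFDerivAt
  have h := (hder_p2 α).mul hinv
  simpa only [Pi.mul_def, ← div_eq_mul_inv, p20, q20, zero_smul, inv_one, one_smul, add_zero, zero_add] using h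
lemma hd3 (α : ℝ) : HasFDerivAt (fun v => p3 α v / q3 α v) L3 0 := by
  have hinv : HasFDerivAt (fun v => (q3 α v)⁻¹) (fderiv ℝ (fun v => (q3 α v)⁻¹) 0) 0 :=
    ((dq3 α).inv (by rw [q30]; norm_num)).hasFDerivAt
  have h := (hder_p3 α).mul hinv
  simpa only [Pi.mul_def, ← div_eq_mul_inv, p30, q30, zero_smul, inv_one, one_smul, add_zero, zero_add] using h

lemma hderPhi (α : ℝ) : HasFDerivAt (Phi α) (L α) 0 := by
  rw [hasFDerivAt_pi']
  intro i
  fin_cases i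
  · exact hd1 α
  · exact hd2 α
  · exact hd3 α

lemma Lbij (α : ℝ) : Function.Bijective (L α) := by
  rw [Function.bijective_iff_has_inverse]
  refine ⟨fun v => ![v 0 - 2/3*α^2 * v 1 - 5/9*α^4 * v 2, v 1 + 5/3*α^2 * v 2, v 2], ?_, ?_⟩
  · intro v
    funext i
    fin_cases i <;> · simp [L, L1, L2, L3, prj]; try ring
  · intro v
    funext i
    fin_cases i <;> · simp [L, L1, L2, L3, prj]; try ring

lemma an_tau (α : ℝ) : AnalyticAt ℝ (tau α) 0 := by
  unfold tau
  exact (analyticAt_id.div (analyticAt_const.add (analyticAt_const.mul analyticAt_id))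
    (by norm_num))

lemma hder_tau (α : ℝ) : HasDerivAt (tau α) 1 0 := by
  have h := (hasDerivAt_id (0:ℝ)).div
    (((hasDerivAt_id (0:ℝ)).const_mul (α/3)).const_add 1) (by norm_num)
  unfold tau
  simpa [Pi.div_def] using h

lemma alg1 (α s : ℝ) :
    p1 α ![s^3 + α*s^4, s^5, s^7] * (1 - α/3*s)^3
      = s^3 * q1 α ![s^3 + α*s^4, s^5, s^7] := by
  simp only [p1, q1, Matrix.cons_val_zero, Matrix.cons_val_one, Matrix.head_cons,
    Matrix.cons_val_two, Matrix.tail_cons]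
  ring

lemma alg2 (α s : ℝ) :
    p2 α ![s^3 + α*s^4, s^5, s^7] * (1 - α/3*s)^5
      = s^5 * q2 α ![s^3 + α*s^4, s^5, s^7] := by
  simp only [p2, q2, Matrix.cons_val_zero, Matrix.cons_val_one, Matrix.head_cons,
    Matrix.cons_val_two, Matrix.tail_cons]
  ring

lemma alg3 (α s : ℝ) :
    p3 α ![s^3 + α*s^4, s^5, s^7] * (1 - α/3*s)^7
      = s^7 * q3 α ![s^3 + α*s^4, s^5, s^7] := by
  simp only [p3, q3, Matrix.cons_val_zero, Matrix.cons_val_one, Matrix.head_cons,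
    Matrix.cons_val_two, Matrix.tail_cons]
  ring

end RLaux

open RLaux

/-- For every `α`, the curve `(t³ + αt⁴, t⁵, t⁷)` is RL-equivalent to `(t³, t⁵, t⁷)`. -/
theorem RLEquiv_t3_alpha_t4 (α : ℝ) :
    RLEquiv (fun t : ℝ => ![t ^ 3 + α * t ^ 4, t ^ 5, t ^ 7])
      (fun t : ℝ => ![t ^ 3, t ^ 5, t ^ 7]) := by
  refine ⟨Phi α, tau α, an_Phi α, Phi0 α, ?_, an_tau α, by simp [tau], ?_, ?_⟩
  · rw [(hderPhi α).fderiv]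
    exact Lbij α
  · rw [(hder_tau α).deriv]
    norm_num
  · have hγc : Continuous (fun s : ℝ => (![s ^ 3 + α * s ^ 4, s ^ 5, s ^ 7] : Fin 3 → ℝ)) := by
      apply continuous_pi
      intro i
      fin_cases i <;> · simp; fun_prop
    have hτc : ContinuousAt (tau α) 0 := (an_tau α).continuousAt
    have hτ0 : tau α 0 = 0 := by simp [tau]
    have key : ∀ (q : ℝ → (Fin 3 → ℝ) → ℝ), Continuous (q α) → q α 0 = 1 →
        ∀ᶠ t in nhds (0:ℝ),
          q α ![(tau α t) ^ 3 + α * (tau α t) ^ 4, (tau α t) ^ 5, (tau α t) ^ 7] ≠ 0 := by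
      intro q hq hq1
      have hcomp : ContinuousAt
          (fun t => q α ![(tau α t) ^ 3 + α * (tau α t) ^ 4, (tau α t) ^ 5, (tau α t) ^ 7]) 0 := by
        exact (hq.continuousAt).comp ((hγc.continuousAt).comp hτc)
      apply hcomp.eventually_ne
      have h0 : (![(0:ℝ) ^ 3 + α * 0 ^ 4, (0:ℝ) ^ 5, (0:ℝ) ^ 7] : Fin 3 → ℝ) = 0 := by
        funext i; fin_cases i <;> norm_num
      rw [hτ0, h0, hq1]
      norm_num
    have hq1c : Continuous (q1 α) := by unfold q1; fun_prop
    have hq2c : Continuous (q2 α) := by unfold q2; fun_prop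
    have hq3c : Continuous (q3 α) := by unfold q3; fun_prop
    have h1 : ∀ᶠ t in nhds (0:ℝ), 1 + α/3 * t ≠ 0 := by
      have : ContinuousAt (fun t : ℝ => 1 + α/3 * t) 0 := by fun_prop
      apply this.eventually_ne
      norm_num
    filter_upwards [h1, key q1 hq1c (q10 α), key q2 hq2c (q20 α), key q3 hq3c (q30 α)]
      with t ht1 hk1 hk2 hk3
    show (![t ^ 3, t ^ 5, t ^ 7] : Fin 3 → ℝ) = Phi α ![(tau α t) ^ 3 + α * (tau α t) ^ 4, (tau α t) ^ 5, (tau α t) ^ 7]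
    funext i
    have hst : tau α t * (1 + α/3 * t) = t := by
      unfold tau; exact div_mul_cancel₀ t ht1
    have hbs : (1 - α/3 * tau α t) * (1 + α/3 * t) = 1 := by
      unfold tau
      calc (1 - α/3 * (t / (1 + α/3 * t))) * (1 + α/3 * t)
          = (1 + α/3 * t) - α/3 * (t / (1 + α/3 * t) * (1 + α/3 * t)) := by ring
        _ = (1 + α/3 * t) - α/3 * t := by rw [div_mul_cancel₀ t ht1]
        _ = 1 := by ring
    set s := tau α t with hs
    set M : Fin 3 → ℝ := ![s ^ 3 + α * s ^ 4, s ^ 5, s ^ 7] with hM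
    fin_cases i
    · show t ^ 3 = Phi α M 0
      rw [show Phi α M 0 = p1 α M / q1 α M from rfl, eq_div_iff hk1]
      calc t ^ 3 * q1 α M = (s * (1 + α/3 * t)) ^ 3 * q1 α M := by rw [hst]
        _ = (p1 α M * (1 - α/3*s)^3) * (1 + α/3 * t) ^ 3 := by rw [alg1 α s]; ring
        _ = p1 α M * ((1 - α/3*s) * (1 + α/3 * t)) ^ 3 := by ring
        _ = p1 α M := by rw [hbs]; ring
    · show t ^ 5 = Phi α M 1
      rw [show Phi α M 1 = p2 α M / q2 α M from rfl, eq_div_iff hk2]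
      calc t ^ 5 * q2 α M = (s * (1 + α/3 * t)) ^ 5 * q2 α M := by rw [hst]
        _ = (p2 α M * (1 - α/3*s)^5) * (1 + α/3 * t) ^ 5 := by rw [alg2 α s]; ring
        _ = p2 α M * ((1 - α/3*s) * (1 + α/3 * t)) ^ 5 := by ring
        _ = p2 α M := by rw [hbs]; ring
    · show t ^ 7 = Phi α M 2
      rw [show Phi α M 2 = p3 α M / q3 α M from rfl, eq_div_iff hk3]
      calc t ^ 7 * q3 α M = (s * (1 + α/3 * t)) ^ 7 * q3 α M := by rw [hst]
        _ = (p3 α M * (1 - α/3*s)^7) * (1 + α/3 * t) ^ 7 := by rw [alg3 α s]; ring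
        _ = p3 α M * ((1 - α/3*s) * (1 + α/3 * t)) ^ 7 := by ring
        _ = p3 α M := by rw [hbs]; ring
end

section
/- The curve germ t ↦ (t³, t⁵ + t⁷, 0) in ℝ³ is RL-equivalent to the curve germ t ↦ (t³, t⁵, 0). -/
open Filter

noncomputable section RLaux

open ContinuousLinearMap

/-- The linear part of the polynomial map `Ψ` below. -/
def Jlin : (Fin 3 → ℝ) ≃ₗ[ℝ] (Fin 3 → ℝ) where
  toFun p := ![p 0 - (3/5)*p 1, p 1, p 2]
  invFun p := ![p 0 + (3/5)*p 1, p 1, p 2]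
  map_add' p q := by funext i; fin_cases i <;> simp <;> ring
  map_smul' c p := by funext i; fin_cases i <;> simp <;> ring
  left_inv p := by funext i; fin_cases i <;> simp
  right_inv p := by funext i; fin_cases i <;> simp

def Jc : (Fin 3 → ℝ) ≃L[ℝ] (Fin 3 → ℝ) := Jlin.toContinuousLinearEquiv

/-- The reparametrization. -/
def tau0 (t : ℝ) : ℝ := t - (1/5)*t^3 - (1/25)*t^5

/-- First component of `Ψ`, such that `Pp (t^3) (t^5) = (tau0 t)^3`. -/
def Pp (x y : ℝ) : ℝ :=
  x - (3/5)*y + (x*x) * ((1/25)*x) + (x*y) * (-(3/3125)*y) + (y*y) * (-(1/15625)*y)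

/-- Second component of `Ψ`, such that `Qq (t^3) (t^5) = (tau0 t)^5 + (tau0 t)^7`. -/
def Qq (x y : ℝ) : ℝ :=
  y + (x*x) * (-(6/5)*x + (16/25)*y + (17/3125)*(x*x*y) + (-(6/15625))*(x*x*x*x*x)
        + (-(78/390625))*(x*x*x*x*y) + (49/9765625)*(x*x*x*x*x*x*x)
        + (7/48828125)*(x*x*x*x*x*x*y))
    + (x*y) * ((4/125)*y + (79/15625)*(x*x*y) + (-(14/244140625))*(x*x*x*x*x*x*y))
    + (y*y) * (-(256/3125)*y + (69/9765625)*(y*y*y) + (-(7/1220703125))*(x*x*x*x*x*x*y)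
        + (-(1/6103515625))*(y*y*y*y*y))

/-- The polynomial map sending the monomial curve `(t³, t⁵, 0)` to `(τ³, τ⁵+τ⁷, 0)`. -/
def PsiF : (Fin 3 → ℝ) → (Fin 3 → ℝ) := fun p => ![Pp (p 0) (p 1), Qq (p 0) (p 1), p 2]

lemma keyP (t : ℝ) : Pp (t^3) (t^5) = (tau0 t)^3 := by unfold Pp tau0; ring

lemma keyQ (t : ℝ) : Qq (t^3) (t^5) = (tau0 t)^5 + (tau0 t)^7 := by unfold Qq tau0; ring

lemma hb (i : Fin 3) : HasStrictFDerivAt (fun p : Fin 3 → ℝ => p i)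
    (proj i : (Fin 3 → ℝ) →L[ℝ] ℝ) 0 :=
  hasStrictFDerivAt_apply (𝕜 := ℝ) i 0

lemma zmulS {f g : (Fin 3 → ℝ) → ℝ} {Lg : (Fin 3 → ℝ) →L[ℝ] ℝ}
    (hf : HasStrictFDerivAt f (0 : (Fin 3 → ℝ) →L[ℝ] ℝ) 0) (h0 : f 0 = 0)
    (hg : HasStrictFDerivAt g Lg 0) :
    HasStrictFDerivAt (fun p => f p * g p) (0 : (Fin 3 → ℝ) →L[ℝ] ℝ) 0 := by
  simpa [h0, Pi.mul_def] using hf.mul hg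

lemma s00 : HasStrictFDerivAt (fun p : Fin 3 → ℝ => p 0 * p 0)
    (0 : (Fin 3 → ℝ) →L[ℝ] ℝ) 0 := by simpa [Pi.mul_def] using (hb 0).mul (hb 0)
lemma s01 : HasStrictFDerivAt (fun p : Fin 3 → ℝ => p 0 * p 1)
    (0 : (Fin 3 → ℝ) →L[ℝ] ℝ) 0 := by simpa [Pi.mul_def] using (hb 0).mul (hb 1)
lemma s11 : HasStrictFDerivAt (fun p : Fin 3 → ℝ => p 1 * p 1)
    (0 : (Fin 3 → ℝ) →L[ℝ] ℝ) 0 := by simpa [Pi.mul_def] using (hb 1).mul (hb 1)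

lemma hPsiStrict : HasStrictFDerivAt PsiF (Jc : (Fin 3 → ℝ) →L[ℝ] (Fin 3 → ℝ)) 0 := by
  have x2y := ((hb 0).mul (hb 0)).mul (hb 1)
  have x5 := (((((hb 0).mul (hb 0)).mul (hb 0)).mul (hb 0)).mul (hb 0))
  have x4y := ((((hb 0).mul (hb 0)).mul (hb 0)).mul (hb 0)).mul (hb 1)
  have x7 := (((((((hb 0).mul (hb 0)).mul (hb 0)).mul (hb 0)).mul (hb 0)).mul (hb 0)).mul (hb 0))
  have x6y := ((((((hb 0).mul (hb 0)).mul (hb 0)).mul (hb 0)).mul (hb 0)).mul (hb 0)).mul (hb 1)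
  have y3 := ((hb 1).mul (hb 1)).mul (hb 1)
  have y5 := (((((hb 1).mul (hb 1)).mul (hb 1)).mul (hb 1)).mul (hb 1))
  have hP : HasStrictFDerivAt (fun p : Fin 3 → ℝ => Pp (p 0) (p 1))
      ((proj 0 : (Fin 3 → ℝ) →L[ℝ] ℝ) - (3/5 : ℝ) • proj 1 + 0 + 0 + 0) 0 := by
    unfold Pp
    exact ((((hb 0).sub ((hb 1).const_mul (3/5))).add
        (zmulS s00 (by simp) ((hb 0).const_mul (1/25)))).add
        (zmulS s01 (by simp) ((hb 1).const_mul (-(3/3125))))).add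
        (zmulS s11 (by simp) ((hb 1).const_mul (-(1/15625))))
  have hGx := (((((((hb 0).const_mul (-(6/5))).add ((hb 1).const_mul (16/25))).add
      (x2y.const_mul (17/3125))).add (x5.const_mul (-(6/15625)))).add
      (x4y.const_mul (-(78/390625)))).add (x7.const_mul (49/9765625))).add
      (x6y.const_mul (7/48828125))
  have hGxy := (((hb 1).const_mul (4/125)).add (x2y.const_mul (79/15625))).add
      (x6y.const_mul (-(14/244140625)))
  have hGy := ((((hb 1).const_mul (-(256/3125))).add (y3.const_mul (69/9765625))).add
      (x6y.const_mul (-(7/1220703125)))).add (y5.const_mul (-(1/6103515625)))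
  have hQ : HasStrictFDerivAt (fun p : Fin 3 → ℝ => Qq (p 0) (p 1))
      ((proj 1 : (Fin 3 → ℝ) →L[ℝ] ℝ) + 0 + 0 + 0) 0 := by
    unfold Qq
    exact (((hb 1).add (zmulS s00 (by simp) hGx)).add
        (zmulS s01 (by simp) hGxy)).add (zmulS s11 (by simp) hGy)
  have key : HasStrictFDerivAt PsiF
      (ContinuousLinearMap.pi ![(proj 0 : (Fin 3 → ℝ) →L[ℝ] ℝ) - (3/5 : ℝ) • proj 1 + 0 + 0 + 0,
        (proj 1 : (Fin 3 → ℝ) →L[ℝ] ℝ) + 0 + 0 + 0, proj 2]) 0 := by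
    apply hasStrictFDerivAt_pi.2
    intro i
    fin_cases i
    · simpa [PsiF] using hP
    · simpa [PsiF] using hQ
    · simpa [PsiF] using hb 2
  refine key.congr_fderiv ?_
  apply ContinuousLinearMap.ext; intro v; funext i
  fin_cases i <;>
    simp [Jc, Jlin, LinearEquiv.coe_toContinuousLinearEquiv', smul_eq_mul]

lemma hbA (i : Fin 3) : AnalyticAt ℝ (fun p : Fin 3 → ℝ => p i) 0 :=
  (proj i : (Fin 3 → ℝ) →L[ℝ] ℝ).analyticAt 0

lemma hPsiAnalytic : AnalyticAt ℝ PsiF 0 := by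
  apply AnalyticAt.pi (f := ![fun p : Fin 3 → ℝ => Pp (p 0) (p 1),
    fun p : Fin 3 → ℝ => Qq (p 0) (p 1), fun p : Fin 3 → ℝ => p 2]) ?_ |>.congr ?_
  · intro i
    fin_cases i
    · unfold Pp
      exact ((((hbA 0).sub (analyticAt_const.mul (hbA 1))).add
          (((hbA 0).mul (hbA 0)).mul (analyticAt_const.mul (hbA 0)))).add
          (((hbA 0).mul (hbA 1)).mul (analyticAt_const.mul (hbA 1)))).add
          (((hbA 1).mul (hbA 1)).mul (analyticAt_const.mul (hbA 1)))
    · unfold Qq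
      have m : ∀ (f g : (Fin 3 → ℝ) → ℝ), AnalyticAt ℝ f 0 → AnalyticAt ℝ g 0 →
          AnalyticAt ℝ (fun p => f p * g p) 0 := fun f g hf hg => hf.mul hg
      refine ((( hbA 1).add ?_).add ?_).add ?_
      · exact m _ _ ((hbA 0).mul (hbA 0))
          (((((((analyticAt_const.mul (hbA 0)).add (analyticAt_const.mul (hbA 1))).add
            (analyticAt_const.mul (((hbA 0).mul (hbA 0)).mul (hbA 1)))).add
            (analyticAt_const.mul (((((hbA 0).mul (hbA 0)).mul (hbA 0)).mul (hbA 0)).mul (hbA 0)))).add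
            (analyticAt_const.mul (((((hbA 0).mul (hbA 0)).mul (hbA 0)).mul (hbA 0)).mul (hbA 1)))).add
            (analyticAt_const.mul (((((((hbA 0).mul (hbA 0)).mul (hbA 0)).mul (hbA 0)).mul (hbA 0)).mul (hbA 0)).mul (hbA 0)))).add
            (analyticAt_const.mul (((((((hbA 0).mul (hbA 0)).mul (hbA 0)).mul (hbA 0)).mul (hbA 0)).mul (hbA 0)).mul (hbA 1))))
      · exact m _ _ ((hbA 0).mul (hbA 1))
          (((analyticAt_const.mul (hbA 1)).add
            (analyticAt_const.mul (((hbA 0).mul (hbA 0)).mul (hbA 1)))).add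
            (analyticAt_const.mul (((((((hbA 0).mul (hbA 0)).mul (hbA 0)).mul (hbA 0)).mul (hbA 0)).mul (hbA 0)).mul (hbA 1))))
      · exact m _ _ ((hbA 1).mul (hbA 1))
          ((((analyticAt_const.mul (hbA 1)).add
            (analyticAt_const.mul (((hbA 1).mul (hbA 1)).mul (hbA 1)))).add
            (analyticAt_const.mul (((((((hbA 0).mul (hbA 0)).mul (hbA 0)).mul (hbA 0)).mul (hbA 0)).mul (hbA 0)).mul (hbA 1)))).add
            (analyticAt_const.mul (((((hbA 1).mul (hbA 1)).mul (hbA 1)).mul (hbA 1)).mul (hbA 1))))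
    · exact hbA 2
  · filter_upwards with p
    funext i
    fin_cases i <;> rfl

lemma hPsi0 : PsiF 0 = 0 := by
  funext i
  fin_cases i <;> simp [PsiF, Pp, Qq]

end RLaux

/-- The curve `(t³, t⁵ + t⁷, 0)` is RL-equivalent to `(t³, t⁵, 0)`. -/
theorem RLEquiv_t3_t5_plus_t7 :
    RLEquiv (fun t : ℝ => ![t ^ 3, t ^ 5 + t ^ 7, 0])
      (fun t : ℝ => ![t ^ 3, t ^ 5, 0]) := by
  have hstrict := hPsiStrict
  set Φ : (Fin 3 → ℝ) → (Fin 3 → ℝ) := hstrict.localInverse PsiF Jc 0 with hΦdef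
  have hσ0 : ![(0:ℝ) ^ 3, (0:ℝ) ^ 5, (0:ℝ)] = (0 : Fin 3 → ℝ) := by
    funext i; fin_cases i <;> norm_num
  have hσc : ContinuousAt (fun t : ℝ => ![t ^ 3, t ^ 5, (0:ℝ)]) 0 := by
    apply Continuous.continuousAt
    apply continuous_pi
    intro i
    fin_cases i <;> simp <;> fun_prop
  have hkey : ∀ t : ℝ, PsiF (![t ^ 3, t ^ 5, 0]) =
      (fun t : ℝ => ![t ^ 3, t ^ 5 + t ^ 7, 0]) (tau0 t) := by
    intro t
    funext i
    fin_cases i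
    · simpa [PsiF] using keyP t
    · simpa [PsiF] using keyQ t
    · simp [PsiF]
  refine ⟨Φ, tau0, ?_, ?_, ?_, ?_, ?_, ?_, ?_⟩
  · -- AnalyticAt Φ 0
    have h0s := hstrict.mem_toOpenPartialHomeomorph_source
    have hco : ⇑(hstrict.toOpenPartialHomeomorph PsiF) = PsiF := hstrict.toOpenPartialHomeomorph_coe
    have hfd : fderiv ℝ (⇑(hstrict.toOpenPartialHomeomorph PsiF)) 0 = (Jc : (Fin 3 → ℝ) →L[ℝ] (Fin 3 → ℝ)) := by
      rw [hco]; exact hstrict.hasFDerivAt.fderiv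
    have h := (hstrict.toOpenPartialHomeomorph PsiF).analyticAt_symm' h0s
      (by rw [hco]; exact hPsiAnalytic) hfd
    rw [hΦdef, hstrict.localInverse_def]
    have : (hstrict.toOpenPartialHomeomorph PsiF) 0 = 0 := by
      show (⇑(hstrict.toOpenPartialHomeomorph PsiF)) 0 = 0
      rw [hco]; exact hPsi0
    rwa [this] at h
  · -- Φ 0 = 0
    have := hstrict.localInverse_apply_image
    rwa [hPsi0] at this
  · -- bijective differential
    have hinv := hstrict.to_localInverse
    rw [hPsi0] at hinv
    rw [hinv.hasFDerivAt.fderiv]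
    exact Jc.symm.bijective
  · -- τ analytic
    unfold tau0
    exact (analyticAt_id.sub (analyticAt_const.mul (analyticAt_id.pow 3))).sub
      (analyticAt_const.mul (analyticAt_id.pow 5))
  · norm_num [tau0]
  · -- deriv τ 0 = 1 ≠ 0
    have h : HasDerivAt tau0 (1 - (1/5)*(3*(0:ℝ)^2) - (1/25)*(5*(0:ℝ)^4)) 0 := by
      unfold tau0
      exact ((hasDerivAt_id 0).sub ((hasDerivAt_pow 3 0).const_mul (1/5))).sub
        ((hasDerivAt_pow 5 0).const_mul (1/25))
    rw [h.deriv]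
    norm_num
  · -- the germ equation
    have hev := hstrict.eventually_left_inverse
    have htd : Filter.Tendsto (fun t : ℝ => ![t ^ 3, t ^ 5, (0:ℝ)]) (nhds 0) (nhds 0) := by
      have := hσc.tendsto
      rwa [hσ0] at this
    filter_upwards [htd.eventually hev] with t ht
    calc (fun t : ℝ => ![t ^ 3, t ^ 5, (0:ℝ)]) t
        = Φ (PsiF ![t ^ 3, t ^ 5, 0]) := ht.symm
      _ = Φ ((fun t : ℝ => ![t ^ 3, t ^ 5 + t ^ 7, 0]) (tau0 t)) := by rw [hkey t]
end

section
/- The curve germ t ↦ (t³, t⁵ − t⁷, 0) in ℝ³ is RL-equivalent to the curve germ t ↦ (t³, t⁵, 0). -/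
open Filter

open scoped ContDiff

/-! ### Auxiliary constructions -/

abbrev E3 : Type := Fin 3 → ℝ

noncomputable def Pg1 (v : E3) : ℝ := -(1/25) * (v 0)^2 + (3/3125) * (v 1)^2
noncomputable def Pg2 (v : E3) : ℝ := -(1/15625) * (v 1)^2
noncomputable def Qg1 (v : E3) : ℝ :=
  -(6/5) * (v 0)^2 - (16/25) * (v 0) * (v 1) + (4/125) * (v 1)^2
    + (17/3125) * (v 0)^3 * (v 1) - (79/15625) * (v 0)^2 * (v 1)^2
    - (6/15625) * (v 0)^6 + (78/390625) * (v 1)^4 - (49/9765625) * (v 0)^8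
    + (7/48828125) * (v 0)^2 * (v 1)^4 + (14/244140625) * (v 0) * (v 1)^5
    - (7/1220703125) * (v 0)^10
noncomputable def Qg2 (v : E3) : ℝ :=
  (256/3125) * (v 1)^2 + (69/9765625) * (v 1)^4 + (1/6103515625) * (v 1)^6

noncomputable def Nf (v : E3) : E3 := ![v 0 * Pg1 v + v 1 * Pg2 v, v 0 * Qg1 v + v 1 * Qg2 v, 0]

noncomputable def Lfun (v : E3) : E3 := ![v 0 + (3/5) * v 1, v 1, v 2]
noncomputable def Linv (v : E3) : E3 := ![v 0 - (3/5) * v 1, v 1, v 2]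

noncomputable def Psi (v : E3) : E3 := Lfun v + Nf v

noncomputable def eLin : E3 ≃ₗ[ℝ] E3 where
  toFun := Lfun
  invFun := Linv
  map_add' u v := by
    funext i; fin_cases i <;>
      simp [Lfun, Pi.add_apply] <;> ring
  map_smul' c v := by
    funext i; fin_cases i <;>
      simp [Lfun, Pi.smul_apply, smul_eq_mul] <;> ring
  left_inv v := by
    funext i; fin_cases i <;> simp [Lfun, Linv] <;> ring
  right_inv v := by
    funext i; fin_cases i <;> simp [Lfun, Linv] <;> ring

noncomputable def eEq : E3 ≃L[ℝ] E3 := eLin.toContinuousLinearEquiv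

lemma mulz {f g : E3 → ℝ} {f' g' : E3 →L[ℝ] ℝ} (hf : HasStrictFDerivAt f f' 0)
    (hg : HasStrictFDerivAt g g' 0) (hf0 : f 0 = 0) (hg0 : g 0 = 0) :
    HasStrictFDerivAt (fun v => f v * g v) (0 : E3 →L[ℝ] ℝ) 0 := by
  exact (by simpa [hf0, hg0] using hf.mul hg : HasStrictFDerivAt (f * g) (0 : E3 →L[ℝ] ℝ) 0)

lemma hPg1c : ContDiff ℝ 2 Pg1 := by unfold Pg1; fun_prop
lemma hPg2c : ContDiff ℝ 2 Pg2 := by unfold Pg2; fun_prop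
lemma hQg1c : ContDiff ℝ 2 Qg1 := by unfold Qg1; fun_prop
lemma hQg2c : ContDiff ℝ 2 Qg2 := by unfold Qg2; fun_prop

lemma hNstrict : HasStrictFDerivAt Nf (0 : E3 →L[ℝ] E3) 0 := by
  apply hasStrictFDerivAt_pi''
  have hx : HasStrictFDerivAt (fun v : E3 => v 0)
      (ContinuousLinearMap.proj (R := ℝ) (φ := fun _ : Fin 3 => ℝ) 0) 0 :=
    (ContinuousLinearMap.proj (R := ℝ) (φ := fun _ : Fin 3 => ℝ) 0).hasStrictFDerivAt
  have hy : HasStrictFDerivAt (fun v : E3 => v 1)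
      (ContinuousLinearMap.proj (R := ℝ) (φ := fun _ : Fin 3 => ℝ) 1) 0 :=
    (ContinuousLinearMap.proj (R := ℝ) (φ := fun _ : Fin 3 => ℝ) 1).hasStrictFDerivAt
  intro i
  fin_cases i
  · have h1 : HasStrictFDerivAt (fun v : E3 => v 0 * Pg1 v) (0 : E3 →L[ℝ] ℝ) 0 :=
      mulz hx (hPg1c.contDiffAt.hasStrictFDerivAt (by norm_num)) rfl (by simp [Pg1])
    have h2 : HasStrictFDerivAt (fun v : E3 => v 1 * Pg2 v) (0 : E3 →L[ℝ] ℝ) 0 :=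
      mulz hy (hPg2c.contDiffAt.hasStrictFDerivAt (by norm_num)) rfl (by simp [Pg2])
    have := h1.add h2
    rw [add_zero] at this; simp [Nf]; exact this
  · have h1 : HasStrictFDerivAt (fun v : E3 => v 0 * Qg1 v) (0 : E3 →L[ℝ] ℝ) 0 :=
      mulz hx (hQg1c.contDiffAt.hasStrictFDerivAt (by norm_num)) rfl (by simp [Qg1])
    have h2 : HasStrictFDerivAt (fun v : E3 => v 1 * Qg2 v) (0 : E3 →L[ℝ] ℝ) 0 :=
      mulz hy (hQg2c.contDiffAt.hasStrictFDerivAt (by norm_num)) rfl (by simp [Qg2])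
    have := h1.add h2
    rw [add_zero] at this; simp [Nf]; exact this
  · have : HasStrictFDerivAt (fun _ : E3 => (0:ℝ)) (0 : E3 →L[ℝ] ℝ) 0 :=
      hasStrictFDerivAt_const 0 0
    simpa [Nf] using this

lemma hLstrict : HasStrictFDerivAt Lfun ((eEq : E3 →L[ℝ] E3)) 0 :=
  (eEq : E3 →L[ℝ] E3).hasStrictFDerivAt

lemma hPsiStrict_s10 : HasStrictFDerivAt Psi ((eEq : E3 →L[ℝ] E3)) 0 := by
  have := hLstrict.add hNstrict
  simpa [Psi] using this

lemma hPsiAnalytic_s10 : AnalyticAt ℝ Psi 0 := by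
  have h : ∀ i : Fin 3, AnalyticAt ℝ (fun v : E3 => Psi v i) 0 := by
    intro i
    fin_cases i <;>
      simp [Psi, Pi.add_apply, Lfun, Nf, Pg1, Pg2, Qg1, Qg2] <;>
      exact ContDiffAt.analyticAt (ContDiff.contDiffAt (by fun_prop))
  exact analyticAt_pi_iff.mpr h

lemma hPsi0_s10 : Psi 0 = 0 := by
  funext i; fin_cases i <;>
    simp [Psi, Lfun, Nf, Pg1, Pg2, Qg1, Qg2] <;> norm_num

/-- The curve `(t³, t⁵ − t⁷, 0)` is RL-equivalent to `(t³, t⁵, 0)`. -/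
theorem RLEquiv_t3_t5_minus_t7 :
    RLEquiv (fun t : ℝ => ![t ^ 3, t ^ 5 - t ^ 7, 0])
      (fun t : ℝ => ![t ^ 3, t ^ 5, 0]) := by
  set τ : ℝ → ℝ := fun t => t + (1/5) * t ^ 3 - (1/25) * t ^ 5 with hτdef
  set Φ : E3 → E3 := HasStrictFDerivAt.localInverse Psi eEq 0 hPsiStrict_s10 with hΦdef
  have key : ∀ t : ℝ, ![(τ t) ^ 3, (τ t) ^ 5 - (τ t) ^ 7, (0:ℝ)] = Psi ![t ^ 3, t ^ 5, 0] := by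
    intro t
    funext i
    fin_cases i <;>
      simp [Psi, Lfun, Nf, Pg1, Pg2, Qg1, Qg2, hτdef, Pi.add_apply] <;> ring
  have hτd : HasDerivAt τ 1 0 := by
    have h := ((hasDerivAt_id (0:ℝ)).add (HasDerivAt.const_mul ((1:ℝ)/5) (hasDerivAt_pow 3 (0:ℝ)))).sub
      (HasDerivAt.const_mul ((1:ℝ)/25) (hasDerivAt_pow 5 (0:ℝ)))
    norm_num at h
    exact h
  refine ⟨Φ, τ, ?_, ?_, ?_, ?_, ?_, ?_, ?_⟩
  · -- AnalyticAt ℝ Φ 0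
    have h := OpenPartialHomeomorph.analyticAt_symm' (f := hPsiStrict_s10.toOpenPartialHomeomorph Psi)
      (i := eEq) hPsiStrict_s10.mem_toOpenPartialHomeomorph_source
      (by rw [HasStrictFDerivAt.toOpenPartialHomeomorph_coe]; exact hPsiAnalytic_s10)
      (by rw [HasStrictFDerivAt.toOpenPartialHomeomorph_coe]; exact hPsiStrict_s10.hasFDerivAt.fderiv)
    have h2 : (hPsiStrict_s10.toOpenPartialHomeomorph Psi) 0 = 0 := hPsi0_s10
    rw [h2] at h
    exact h
  · have := hPsiStrict_s10.localInverse_apply_image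
    rwa [hPsi0_s10] at this
  · -- Bijective fderiv
    have hΦd : HasStrictFDerivAt Φ ((eEq.symm : E3 →L[ℝ] E3)) 0 := by
      have := hPsiStrict_s10.to_localInverse
      rwa [hPsi0_s10] at this
    rw [hΦd.hasFDerivAt.fderiv]
    exact eEq.symm.bijective
  · -- AnalyticAt τ
    have h : ContDiff ℝ ω τ := by rw [hτdef]; fun_prop
    exact h.contDiffAt.analyticAt
  · simp [hτdef]
  · rw [hτd.deriv]; norm_num
  · -- eventual equality
    have hev := hPsiStrict_s10.eventually_left_inverse
    have hσc : Continuous (fun t : ℝ => ![t ^ 3, t ^ 5, (0:ℝ)]) := by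
      refine continuous_pi fun i => ?_
      fin_cases i
      · simpa using continuous_pow 3
      · simpa using continuous_pow 5
      · simpa using continuous_const (y := (0:ℝ))
    have hσ0 : (fun t : ℝ => ![t ^ 3, t ^ 5, (0:ℝ)]) 0 = 0 := by
      funext i; fin_cases i <;> simp
    have hσt : Tendsto (fun t : ℝ => ![t ^ 3, t ^ 5, (0:ℝ)]) (nhds 0) (nhds 0) := by
      have h := hσc.continuousAt (x := 0)
      have e0 : (![(0:ℝ) ^ 3, 0 ^ 5, 0] : E3) = 0 := by funext i; fin_cases i <;> norm_num
      rw [ContinuousAt] at h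
      simp only [e0] at h
      exact h
    filter_upwards [hσt.eventually hev] with t ht
    show ![t ^ 3, t ^ 5, (0:ℝ)] = Φ ![(τ t) ^ 3, (τ t) ^ 5 - (τ t) ^ 7, 0]
    rw [key t]
    exact ht.symm
end

section
/- (Zariski's elimination technique for short parameterizations.) Let n < m be positive integers and let S = {an + bm : a, b ∈ ℕ, (a,b) ≠ (0,0)} be the numerical semigroup generated by n and m. Let ν > m be an integer with ν ∉ S but ν + n ∈ S. Then: (i) ν + n = (j+1)m for some integer j ≥ 1; and (ii) for every b ∈ ℝ and every real-analytic function h defined near 0 in ℝ with h identically zero or ord(h) > ν, there exists a real-analytic function h' near 0 with h' identically zero or ord(h') > ν such that the planar curve germ t ↦ (tⁿ, t^m + b t^ν + h(t)) in ℝ² is RL-equivalent to the curve germ τ ↦ (τⁿ, τ^m + h'(τ)). -/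
open Filter

/-- The numerical semigroup generated by `n` and `m`. -/
def numSemigroup2 (n m : ℕ) : Set ℕ :=
  {k | ∃ a b : ℕ, (a ≠ 0 ∨ b ≠ 0) ∧ k = a * n + b * m}

section ZariskiAux

open Topology

/-- Analytic inverse function theorem, 1D. -/
lemma analytic_local_inverse {f : ℝ → ℝ} {x d : ℝ} (hf : AnalyticAt ℝ f x)
    (hd : HasDerivAt f d x) (hd0 : d ≠ 0) :
    ∃ g : ℝ → ℝ, AnalyticAt ℝ g (f x) ∧ g (f x) = x ∧ HasDerivAt g d⁻¹ (f x) ∧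
      (∀ᶠ y in 𝓝 (f x), f (g y) = y) ∧ (∀ᶠ u in 𝓝 x, g (f u) = u) := by
  have hstrict : HasStrictDerivAt f d x :=
    (hf.contDiffAt (n := 1)).hasStrictDerivAt' hd one_ne_zero
  have hsf := hstrict.hasStrictFDerivAt_equiv hd0
  set i := (ContinuousLinearEquiv.unitsEquivAut ℝ) (Units.mk0 d hd0) with hi
  set ph := HasStrictFDerivAt.toOpenPartialHomeomorph f hsf with hph
  have hcoe : (ph : ℝ → ℝ) = f := HasStrictFDerivAt.toOpenPartialHomeomorph_coe hsf
  have hmem : x ∈ ph.source := HasStrictFDerivAt.mem_toOpenPartialHomeomorph_source hsf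
  obtain ⟨p, hp⟩ := hf
  have hp' : HasFPowerSeriesAt (ph : ℝ → ℝ) p x := by rw [hcoe]; exact hp
  have hp1 : p 1 = (continuousMultilinearCurryFin1 ℝ ℝ ℝ).symm (i : ℝ →L[ℝ] ℝ) := by
    ext v
    rw [FormalMultilinearSeries.apply_eq_prod_smul_coeff, continuousMultilinearCurryFin1_symm_apply]
    have hc : p.coeff 1 = d := by
      have := hp.deriv
      rw [hd.deriv] at this
      exact this.symm
    simp [hc, hi, ContinuousLinearEquiv.unitsEquivAut, mul_comm]
  have hsymm := ph.hasFPowerSeriesAt_symm hmem hp' hp1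
  refine ⟨ph.symm, ?_, ?_, ?_, ?_, ?_⟩
  · rw [← hcoe]; exact ⟨_, hsymm⟩
  · rw [← hcoe]; exact ph.left_inv hmem
  · have hg : ∀ᶠ u in 𝓝 x, ph.symm (f u) = u := by
      filter_upwards [ph.eventually_left_inverse hmem] with u hu
      rw [← hcoe]; exact hu
    exact (hstrict.to_local_left_inverse hd0 hg).hasDerivAt
  · have := ph.eventually_right_inverse' hmem
    rw [hcoe] at this
    filter_upwards [this] with y hy
    rw [← hcoe]; exact hy
  · filter_upwards [ph.eventually_left_inverse hmem] with u hu
    rw [← hcoe]; exact hu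

/-- If `f` agrees near `0` with `z^k * g z` for `g` analytic, then the iterated derivatives of `f`
at `0` vanish below `k` and at `k` equal `k! * g 0`. -/
lemma iteratedDeriv_factor : ∀ (k : ℕ) (f g : ℝ → ℝ), AnalyticAt ℝ g 0 →
    (f =ᶠ[𝓝 (0:ℝ)] fun z => z ^ k * g z) →
    (∀ i < k, iteratedDeriv i f 0 = 0) ∧
      iteratedDeriv k f 0 = ((Nat.factorial k : ℕ) : ℝ) * g 0 := by
  intro k
  induction k with
  | zero =>
    intro f g hg hfg
    refine ⟨fun i hi => absurd hi (Nat.not_lt_zero i), ?_⟩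
    have h0 : f 0 = g 0 := by simpa using hfg.eq_of_nhds
    simpa [iteratedDeriv_zero] using h0
  | succ k ih =>
    intro f g hg hfg
    have hgev : ∀ᶠ z in 𝓝 (0:ℝ), AnalyticAt ℝ g z := hg.eventually_analyticAt
    have hgan' : AnalyticAt ℝ (deriv g) 0 := by
      have : AnalyticOnNhd ℝ g {z | AnalyticAt ℝ g z} := fun z hz => hz
      exact this.deriv 0 hg
    have hG : AnalyticAt ℝ (fun z => ((k:ℝ)+1) * g z + z * deriv g z) 0 :=
      ((analyticAt_const).mul hg).add ((analyticAt_id).mul hgan')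
    have hderiv : deriv f =ᶠ[𝓝 (0:ℝ)] fun z => z ^ k * (((k:ℝ)+1) * g z + z * deriv g z) := by
      refine hfg.deriv.trans ?_
      filter_upwards [hgev] with z hz
      rw [deriv_fun_mul (differentiableAt_pow _) hz.differentiableAt, deriv_pow_field]
      push_cast
      ring
    obtain ⟨ihv, ihk⟩ := ih (deriv f) _ hG hderiv
    constructor
    · intro i hi
      cases i with
      | zero =>
        have h0 : f 0 = 0 := by simpa using hfg.eq_of_nhds
        simpa [iteratedDeriv_zero] using h0
      | succ i =>
        rw [iteratedDeriv_succ']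
        exact ihv i (by omega)
    · rw [iteratedDeriv_succ', ihk, Nat.factorial_succ]
      push_cast
      ring

/-- An analytic function whose iterated derivatives vanish up to `ν` factors as `z^(ν+1) * g`. -/
lemma exists_factor_of_derivs {f : ℝ → ℝ} (hf : AnalyticAt ℝ f 0) (ν : ℕ)
    (h0 : ∀ i ≤ ν, iteratedDeriv i f 0 = 0) :
    ∃ g : ℝ → ℝ, AnalyticAt ℝ g 0 ∧ f =ᶠ[𝓝 (0:ℝ)] fun z => z ^ (ν+1) * g z := by
  by_cases hz : ∀ᶠ z in 𝓝 (0:ℝ), f z = 0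
  · exact ⟨0, analyticAt_const, by filter_upwards [hz] with z hz; simp [hz]⟩
  · obtain ⟨k, g, hg, hg0, hfg⟩ := (hf.exists_eventuallyEq_pow_smul_nonzero_iff).mpr hz
    have hfg' : f =ᶠ[𝓝 (0:ℝ)] fun z => z ^ k * g z := by
      filter_upwards [hfg] with z hz; simpa using hz
    have hk : ν < k := by
      by_contra hk
      push_neg at hk
      have h2 := (iteratedDeriv_factor k f g hg hfg').2
      rw [h0 k hk] at h2
      have hkf : ((Nat.factorial k : ℕ) : ℝ) ≠ 0 := Nat.cast_ne_zero.mpr (Nat.factorial_ne_zero k)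
      rcases mul_eq_zero.mp h2.symm with h3 | h3
      · exact hkf h3
      · exact hg0 h3
    refine ⟨fun z => z ^ (k - (ν+1)) * g z, (analyticAt_id.pow _).mul hg, ?_⟩
    filter_upwards [hfg'] with z hz
    rw [hz, ← mul_assoc, ← pow_add]
    congr 2
    omega

lemma factor_of_ord {f : ℝ → ℝ} (hf : AnalyticAt ℝ f 0) {ν : ℕ}
    (hyp : (∀ᶠ t in 𝓝 (0:ℝ), f t = 0) ∨ ν < ord f) :
    ∃ g, AnalyticAt ℝ g 0 ∧ f =ᶠ[𝓝 (0:ℝ)] fun z => z ^ (ν+1) * g z := by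
  rcases hyp with hyp | hyp
  · exact ⟨0, analyticAt_const, by filter_upwards [hyp] with z hz; simp [hz]⟩
  · apply exists_factor_of_derivs hf
    intro i hi
    by_contra hne
    have : ord f ≤ i := Nat.sInf_le hne
    omega

lemma ord_of_factor {f g : ℝ → ℝ} (hf : AnalyticAt ℝ f 0) (hg : AnalyticAt ℝ g 0) {ν : ℕ}
    (hfg : f =ᶠ[𝓝 (0:ℝ)] fun z => z ^ (ν+1) * g z) :
    (∀ᶠ t in 𝓝 (0:ℝ), f t = 0) ∨ ν < ord f := by
  by_cases hz : ∀ᶠ t in 𝓝 (0:ℝ), f t = 0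
  · exact Or.inl hz
  right
  have hvan : ∀ i ≤ ν, iteratedDeriv i f 0 = 0 := fun i hi =>
    (iteratedDeriv_factor (ν+1) f g hg hfg).1 i (by omega)
  have hne : {i : ℕ | iteratedDeriv i f 0 ≠ 0}.Nonempty := by
    by_contra hempty
    rw [Set.not_nonempty_iff_eq_empty] at hempty
    obtain ⟨p, hp⟩ := hf
    apply hz
    rw [hp.locally_zero_iff]
    ext k v
    have hc : p.coeff k = 0 := by
      obtain ⟨r, hr⟩ := hp
      have h1 := hr.factorial_smul (1:ℝ) k
      have h2 : iteratedDeriv k f 0 = 0 := by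
        by_contra hcon
        exact Set.eq_empty_iff_forall_notMem.mp hempty k hcon
      rw [iteratedDeriv_eq_iteratedFDeriv] at h2
      rw [h2, nsmul_eq_mul] at h1
      have hkf : ((Nat.factorial k : ℕ) : ℝ) ≠ 0 := Nat.cast_ne_zero.mpr (Nat.factorial_ne_zero k)
      rcases mul_eq_zero.mp h1 with h3 | h3
      · exact absurd h3 hkf
      · exact h3
    simp [FormalMultilinearSeries.apply_eq_prod_smul_coeff, hc]
  have hmem := Nat.sInf_mem hne
  by_contra hle
  push_neg at hle
  exact hmem (hvan _ hle)

lemma shear_exists (c : ℝ) (j : ℕ) (hj : j ≠ 0) :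
    ∃ Φ : (Fin 2 → ℝ) → (Fin 2 → ℝ),
      (∀ v, Φ v = ![v 0 + c * (v 1)^j, v 1]) ∧ AnalyticAt ℝ Φ 0 ∧ Φ 0 = 0 ∧
      Function.Bijective (fderiv ℝ Φ 0) := by
  classical
  set Φ : (Fin 2 → ℝ) → (Fin 2 → ℝ) := fun v => ![v 0 + c * (v 1)^j, v 1] with hΦ
  set Ψ : (Fin 2 → ℝ) → (Fin 2 → ℝ) := fun v => ![v 0 - c * (v 1)^j, v 1] with hΨ
  have hproj0 : AnalyticAt ℝ (fun v : Fin 2 → ℝ => v 0) 0 :=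
    (ContinuousLinearMap.proj (R := ℝ) (φ := fun _ : Fin 2 => ℝ) 0).analyticAt 0
  have hproj1 : AnalyticAt ℝ (fun v : Fin 2 → ℝ => v 1) 0 :=
    (ContinuousLinearMap.proj (R := ℝ) (φ := fun _ : Fin 2 => ℝ) 1).analyticAt 0
  have hA : AnalyticAt ℝ (fun v : Fin 2 → ℝ => v 0 + c * (v 1)^j) 0 :=
    hproj0.add (analyticAt_const.mul (hproj1.pow j))
  have hB : AnalyticAt ℝ (fun v : Fin 2 → ℝ => v 0 - c * (v 1)^j) 0 :=
    hproj0.sub (analyticAt_const.mul (hproj1.pow j))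
  have hΦan : AnalyticAt ℝ Φ 0 := by
    have heq : Φ = fun v i => (![fun v : Fin 2 → ℝ => v 0 + c * (v 1)^j, fun v => v 1] i v) := by
      funext v i
      fin_cases i <;> simp [hΦ]
    rw [heq]
    apply AnalyticAt.pi
    intro i
    fin_cases i
    · simpa using hA
    · simpa using hproj1
  have hΨan : AnalyticAt ℝ Ψ 0 := by
    have heq : Ψ = fun v i => (![fun v : Fin 2 → ℝ => v 0 - c * (v 1)^j, fun v => v 1] i v) := by
      funext v i
      fin_cases i <;> simp [hΨ]
    rw [heq]
    apply AnalyticAt.pi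
    intro i
    fin_cases i
    · simpa using hB
    · simpa using hproj1
  have hΨΦ : ∀ v, Ψ (Φ v) = v := by
    intro v
    funext i
    fin_cases i <;> simp [hΦ, hΨ]
  have hΦΨ : ∀ v, Φ (Ψ v) = v := by
    intro v
    funext i
    fin_cases i <;> simp [hΦ, hΨ]
  have hΦ0 : Φ 0 = 0 := by
    funext i
    fin_cases i <;> simp [hΦ, zero_pow hj]
  have hΨ0 : Ψ 0 = 0 := by
    funext i
    fin_cases i <;> simp [hΨ, zero_pow hj]
  have hdΦ : DifferentiableAt ℝ Φ 0 := hΦan.differentiableAt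
  have hdΨ : DifferentiableAt ℝ Ψ 0 := hΨan.differentiableAt
  have h1 : (fderiv ℝ Ψ 0).comp (fderiv ℝ Φ 0) = ContinuousLinearMap.id ℝ _ := by
    have hcomp : fderiv ℝ (Ψ ∘ Φ) 0 = (fderiv ℝ Ψ (Φ 0)).comp (fderiv ℝ Φ 0) :=
      fderiv_comp _ (by rw [hΦ0]; exact hdΨ) hdΦ
    rw [hΦ0] at hcomp
    rw [← hcomp, show Ψ ∘ Φ = id from funext hΨΦ, fderiv_id]
  have h2 : (fderiv ℝ Φ 0).comp (fderiv ℝ Ψ 0) = ContinuousLinearMap.id ℝ _ := by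
    have hcomp : fderiv ℝ (Φ ∘ Ψ) 0 = (fderiv ℝ Φ (Ψ 0)).comp (fderiv ℝ Ψ 0) :=
      fderiv_comp _ (by rw [hΨ0]; exact hdΦ) hdΨ
    rw [hΨ0] at hcomp
    rw [← hcomp, show Φ ∘ Ψ = id from funext hΦΨ, fderiv_id]
  refine ⟨Φ, fun v => rfl, hΦan, hΦ0, ?_, ?_⟩
  · intro x y hxy
    have hfxy := congrArg (fderiv ℝ Ψ 0) hxy
    have h1x := DFunLike.congr_fun h1 x
    have h1y := DFunLike.congr_fun h1 y
    simp only [ContinuousLinearMap.comp_apply, ContinuousLinearMap.id_apply] at h1x h1y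
    rw [← h1x, ← h1y, hfxy]
  · intro y
    refine ⟨fderiv ℝ Ψ 0 y, ?_⟩
    have h2y := DFunLike.congr_fun h2 y
    simpa only [ContinuousLinearMap.comp_apply, ContinuousLinearMap.id_apply] using h2y

end ZariskiAux

open Topology in
/-- Zariski's elimination technique for short parameterizations of planar curve germs. -/
theorem zariski_elimination (n m : ℕ) (hn : 0 < n) (hnm : n < m)
    (ν : ℕ) (hν : m < ν) (hν1 : ν ∉ numSemigroup2 n m) (hν2 : ν + n ∈ numSemigroup2 n m) :
    (∃ j : ℕ, 1 ≤ j ∧ ν + n = (j + 1) * m) ∧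
    (∀ (b : ℝ) (h : ℝ → ℝ), AnalyticAt ℝ h 0 →
      ((∀ᶠ t in nhds (0 : ℝ), h t = 0) ∨ ν < ord h) →
      ∃ h' : ℝ → ℝ, AnalyticAt ℝ h' 0 ∧
        ((∀ᶠ t in nhds (0 : ℝ), h' t = 0) ∨ ν < ord h') ∧
        RLEquiv (fun t : ℝ => ![t ^ n, t ^ m + b * t ^ ν + h t])
          (fun τ : ℝ => ![τ ^ n, τ ^ m + h' τ])) := by
  -- Part (i)
  have hpart1 : ∃ j : ℕ, 1 ≤ j ∧ ν + n = (j + 1) * m := by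
    obtain ⟨a0, b0, hab, habe⟩ := hν2
    rcases Nat.eq_zero_or_pos a0 with ha | ha
    · subst ha
      simp only [zero_mul, zero_add] at habe
      have hb2 : 2 ≤ b0 := by
        rcases Nat.lt_or_ge b0 2 with hb | hb
        · interval_cases b0 <;> omega
        · exact hb
      refine ⟨b0 - 1, by omega, ?_⟩
      rw [habe]
      congr 1
      omega
    · exfalso
      apply hν1
      have ha1 : a0 = (a0 - 1) + 1 := by omega
      rw [ha1, Nat.succ_mul] at habe
      refine ⟨a0 - 1, b0, ?_, by omega⟩
      by_contra hcon
      push_neg at hcon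
      obtain ⟨h1, h2⟩ := hcon
      rw [h1, h2] at habe
      simp at habe
      omega
  refine ⟨hpart1, ?_⟩
  obtain ⟨j, hj1, hjm⟩ := hpart1
  intro b h hh hyp
  obtain ⟨g, hgan, hg⟩ := factor_of_ord hh hyp
  obtain ⟨e', hee⟩ : ∃ e', ν = m + (e' + 1) := ⟨ν - m - 1, by omega⟩
  set e := e' + 1 with he
  have hje : e + n = j * m := by
    have hx : ν + n = j * m + m := by rw [hjm]; ring
    omega
  have hn0 : (n:ℝ) ≠ 0 := Nat.cast_ne_zero.mpr (by omega)
  have hm0 : (m:ℝ) ≠ 0 := Nat.cast_ne_zero.mpr (by omega)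
  set c : ℝ := n * b / m with hc
  set q : ℝ → ℝ := fun s => s ^ m + b * s ^ ν + h s with hqdef
  have hqan : AnalyticAt ℝ q 0 :=
    ((analyticAt_id.pow m).add (analyticAt_const.mul (analyticAt_id.pow ν))).add hh
  set Q : ℝ → ℝ := fun s => 1 + b * s ^ e + s ^ (e+1) * g s with hQdef
  have hQan : AnalyticAt ℝ Q 0 :=
    (analyticAt_const.add (analyticAt_const.mul (analyticAt_id.pow e))).add
      ((analyticAt_id.pow (e+1)).mul hgan)
  have hqQ : ∀ᶠ s in 𝓝 (0:ℝ), q s = s ^ m * Q s := by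
    filter_upwards [hg] with s hs
    simp only [hqdef, hQdef]
    rw [hs, hee, he]
    ring
  set W : ℝ → ℝ := fun s => c * s ^ e * Q s ^ j with hWdef
  have hWan : AnalyticAt ℝ W 0 := (analyticAt_const.mul (analyticAt_id.pow e)).mul (hQan.pow j)
  have hW0 : W 0 = 0 := by simp [hWdef, zero_pow (by omega : e ≠ 0)]
  -- the analytic n-th root near 1
  have hpow_an : AnalyticAt ℝ (fun u : ℝ => u ^ n) 1 := analyticAt_id.pow n
  have hpow_d : HasDerivAt (fun u : ℝ => u ^ n) ((n:ℝ)) 1 := by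
    simpa using hasDerivAt_pow n (1:ℝ)
  obtain ⟨rt, hrtan, hrt1, hrtd, hrtr, hrtl⟩ := analytic_local_inverse hpow_an hpow_d hn0
  rw [one_pow] at hrtan hrt1 hrtd hrtr
  set R : ℝ → ℝ := fun s => rt (1 + W s) with hRdef
  have h1W : AnalyticAt ℝ (fun s => 1 + W s) 0 := analyticAt_const.add hWan
  have hRan : AnalyticAt ℝ R 0 := by
    have hx : AnalyticAt ℝ rt (1 + W 0) := by rw [hW0, add_zero]; exact hrtan
    exact AnalyticAt.comp (g := rt) (f := fun s => 1 + W s) hx h1W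
  have hR0 : R 0 = 1 := by
    simp only [hRdef, hW0, add_zero]
    exact hrt1
  have hWtend1 : Filter.Tendsto (fun s => 1 + W s) (𝓝 0) (𝓝 1) := by
    have := h1W.continuousAt.tendsto
    rwa [hW0, add_zero] at this
  have hRpow : ∀ᶠ s in 𝓝 (0:ℝ), R s ^ n = 1 + W s := hWtend1.eventually hrtr
  set ρ : ℝ → ℝ := fun s => s * R s with hρdef
  have hρan : AnalyticAt ℝ ρ 0 := analyticAt_id.mul hRan
  have hρ0 : ρ 0 = 0 := by simp [hρdef]
  have hρd : HasDerivAt ρ 1 0 := by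
    have hx := (hasDerivAt_id (0:ℝ)).fun_mul (hRan.differentiableAt.hasDerivAt)
    simpa [hR0] using hx
  obtain ⟨τ, hτan, hτ0, hτd, hρτ, hτρ⟩ := analytic_local_inverse hρan hρd one_ne_zero
  rw [hρ0] at hτan hτ0 hτd hρτ
  have hτtend : Filter.Tendsto τ (𝓝 0) (𝓝 0) := by
    have := hτan.continuousAt.tendsto
    rwa [hτ0] at this
  -- key identity 1 : ρ^n = s^n + c q^j
  have hkey1 : ∀ᶠ s in 𝓝 (0:ℝ), (ρ s) ^ n = s ^ n + c * (q s) ^ j := by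
    filter_upwards [hRpow, hqQ] with s h1 h2
    have hx : (ρ s)^n = s^n * (1 + W s) := by
      simp only [hρdef]
      rw [mul_pow, h1]
    rw [hx, h2, hWdef]
    rw [mul_pow (s^m) (Q s) j, ← pow_mul]
    have hmj : m * j = e + n := by rw [mul_comm]; exact hje.symm
    rw [hmj, pow_add]
    ring
  -- expansion of the m-th power of the root
  have hφfac : ∃ A, AnalyticAt ℝ A 0 ∧
      (fun w : ℝ => rt (1+w)^m - 1 - ((m:ℝ)/n) * w) =ᶠ[𝓝 (0:ℝ)] fun w => w^2 * A w := by
    have h1p : AnalyticAt ℝ (fun w : ℝ => rt (1 + w)) 0 := by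
      have hx : AnalyticAt ℝ rt ((1:ℝ) + 0) := by rw [add_zero]; exact hrtan
      exact hx.comp (analyticAt_const.add analyticAt_id)
    have hφan : AnalyticAt ℝ (fun w : ℝ => rt (1+w)^m - 1 - ((m:ℝ)/n) * w) 0 :=
      ((h1p.pow m).sub analyticAt_const).sub (analyticAt_const.mul analyticAt_id)
    have hin : HasDerivAt (fun w : ℝ => rt (1 + w)) ((n:ℝ)⁻¹ * 1) 0 := by
      have hinner : HasDerivAt (fun w : ℝ => 1 + w) 1 0 := by
        simpa using (hasDerivAt_id (0:ℝ)).const_add (1:ℝ)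
      have hout : HasDerivAt rt ((n:ℝ)⁻¹) ((1:ℝ) + 0) := by rw [add_zero]; exact hrtd
      exact hout.comp 0 hinner
    have hφd : HasDerivAt (fun w : ℝ => rt (1+w)^m - 1 - ((m:ℝ)/n) * w) 0 0 := by
      have h3 := (hin.fun_pow m).sub_const 1
      have h4 := h3.fun_sub ((hasDerivAt_id (0:ℝ)).const_mul ((m:ℝ)/n))
      convert h4 using 1
      · rfl
      · rfl
      · rfl
      have hrt10 : rt ((1:ℝ) + 0) = 1 := by rw [add_zero]; exact hrt1
      rw [hrt10]
      field_simp
      simp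
    apply exists_factor_of_derivs hφan 1
    intro i hi
    interval_cases i
    · simp [iteratedDeriv_zero, hrt1]
    · rw [iteratedDeriv_one, hφd.deriv]
  obtain ⟨A, hAan, hAfac⟩ := hφfac
  have hAW : AnalyticAt ℝ (fun s => A (W s)) 0 := by
    have hx : AnalyticAt ℝ A (W 0) := by rw [hW0]; exact hAan
    exact hx.comp hWan
  have hWtend0 : Filter.Tendsto W (𝓝 0) (𝓝 0) := by
    have := hWan.continuousAt.tendsto
    rwa [hW0] at this
  have hRm : ∀ᶠ s in 𝓝 (0:ℝ), R s ^ m = 1 + ((m:ℝ)/n) * W s + (W s)^2 * A (W s) := by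
    filter_upwards [hWtend0.eventually hAfac] with s hs
    have hx : R s ^ m = rt (1 + W s) ^ m := by simp only [hRdef]
    rw [hx]
    linarith [hs]
  set P : ℝ → ℝ := fun s => ∑ i ∈ Finset.range j, Q s ^ i with hPdef
  have hPan : AnalyticAt ℝ P 0 := Finset.analyticAt_fun_sum _ (fun i _ => hQan.pow i)
  set E₁ : ℝ → ℝ := fun s =>
    g s - s ^ e' * (b * (b + s * g s) * P s + c^2 * (Q s ^ j)^2 * A (W s)) with hE₁def
  have hE₁an : AnalyticAt ℝ E₁ 0 :=
    hgan.sub ((analyticAt_id.pow e').mul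
      (((analyticAt_const.mul (analyticAt_const.add (analyticAt_id.mul hgan))).mul hPan).add
        ((analyticAt_const.mul ((hQan.pow j).pow 2)).mul hAW)))
  have hmw : ∀ s : ℝ, ((m:ℝ)/n) * W s = b * s^e * Q s ^ j := by
    intro s
    simp only [hWdef, hc]
    field_simp
  have hkey2 : ∀ᶠ s in 𝓝 (0:ℝ), q s - (ρ s)^m = s^(ν+1) * E₁ s := by
    filter_upwards [hqQ, hRm] with s h1 h2
    have hgeom : Q s ^ j = 1 + (Q s - 1) * P s := by
      have hgs := geom_sum_mul (Q s) j
      simp only [hPdef]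
      nlinarith [hgs]
    have hrm : (ρ s)^m = s^m * (1 + ((m:ℝ)/n) * W s + (W s)^2 * A (W s)) := by
      simp only [hρdef]
      rw [mul_pow, h2]
    rw [h1, hrm, hE₁def, hmw s]
    simp only [hWdef, hQdef] at hgeom ⊢
    rw [hgeom]
    rw [hee, he]
    ring
  -- the new remainder
  set h' : ℝ → ℝ := fun t => q (τ t) - t^m with hh'def
  have hqτan : AnalyticAt ℝ (fun t => q (τ t)) 0 := by
    have hx : AnalyticAt ℝ q (τ 0) := by rw [hτ0]; exact hqan
    exact hx.comp hτan
  have hh'an : AnalyticAt ℝ h' 0 := hqτan.sub (analyticAt_id.pow m)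
  obtain ⟨V, hVan, hV⟩ := exists_factor_of_derivs hτan 0 (by
    intro i hi
    interval_cases i
    simpa [iteratedDeriv_zero] using hτ0)
  set E₂ : ℝ → ℝ := fun t => V t ^ (ν+1) * E₁ (τ t) with hE₂def
  have hE₂an : AnalyticAt ℝ E₂ 0 := by
    refine (hVan.pow _).mul ?_
    have hx : AnalyticAt ℝ E₁ (τ 0) := by rw [hτ0]; exact hE₁an
    exact hx.comp hτan
  have hfac : h' =ᶠ[𝓝 (0:ℝ)] fun t => t^(ν+1) * E₂ t := by
    filter_upwards [hρτ, hτtend.eventually hkey2, hV] with t h1 h2 h3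
    rw [pow_one] at h3
    calc h' t = q (τ t) - (ρ (τ t))^m := by simp only [hh'def]; rw [h1]
    _ = (τ t)^(ν+1) * E₁ (τ t) := h2
    _ = (t * V t)^(ν+1) * E₁ (τ t) := by rw [← h3]
    _ = t^(ν+1) * E₂ t := by simp only [hE₂def]; rw [mul_pow]; ring
  have hordh' := ord_of_factor hh'an hE₂an hfac
  obtain ⟨Φ, hΦeq, hΦan, hΦ0, hΦbij⟩ := shear_exists c j (by omega)
  refine ⟨h', hh'an, hordh', Φ, τ, hΦan, hΦ0, hΦbij, hτan, hτ0, ?_, ?_⟩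
  · rw [hτd.deriv]
    norm_num
  · filter_upwards [hρτ, hτtend.eventually hkey1] with t h1 h2
    rw [hΦeq]
    have h2' : (ρ (τ t))^n = (τ t)^n + c * (q (τ t))^j := h2
    rw [h1] at h2'
    simp only [hqdef] at h2'
    have e0 : t ^ n = τ t ^ n + c * (τ t ^ m + b * τ t ^ ν + h (τ t)) ^ j := h2'
    have e1 : t ^ m + h' t = τ t ^ m + b * τ t ^ ν + h (τ t) := by
      simp only [hh'def, hqdef]
      ring
    rw [e1, e0]
    simp [Matrix.cons_val_zero, Matrix.cons_val_one, Matrix.head_cons]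
end

section
/- Let x, y, z, u, v, u₂, v₂ be real-analytic functions defined near 0 in ℝ, all vanishing at 0, satisfying the integrality relations of the level-two Kumpera–Rubin Pfaffian system along a curve: y'(t) = u(t)·x'(t), z'(t) = v(t)·x'(t), x'(t) = u₂(t)·u'(t), v'(t) = v₂(t)·u'(t) for all t near 0. Assume u'(0) = 0, u''(0) ≠ 0, and u₂'(0) ≠ 0. Then ord(x) = 3 and ord(y) = 5. -/
open Filter

local notation "D" => (deriv : (ℝ → ℝ) → ℝ → ℝ)

lemma aDeriv {f : ℝ → ℝ} (hf : AnalyticAt ℝ f 0) : AnalyticAt ℝ (D f) 0 := by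
  obtain ⟨s, h1, h2, h3⟩ := eventually_nhds_iff.mp hf.eventually_analyticAt
  exact (AnalyticOnNhd.deriv (fun y hy => h1 y hy)) 0 h3

lemma evMul {f g : ℝ → ℝ} (hf : AnalyticAt ℝ f 0) (hg : AnalyticAt ℝ g 0) :
    D (fun t => f t * g t) =ᶠ[nhds 0] fun t => D f t * g t + f t * D g t := by
  filter_upwards [hf.eventually_analyticAt, hg.eventually_analyticAt] with t h1 h2
  exact deriv_mul h1.differentiableAt h2.differentiableAt

lemma evAdd {f g : ℝ → ℝ} (hf : AnalyticAt ℝ f 0) (hg : AnalyticAt ℝ g 0) :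
    D (fun t => f t + g t) =ᶠ[nhds 0] fun t => D f t + D g t := by
  filter_upwards [hf.eventually_analyticAt, hg.eventually_analyticAt] with t h1 h2
  exact deriv_add h1.differentiableAt h2.differentiableAt

lemma evMul2 {a b c d : ℝ → ℝ} (ha : AnalyticAt ℝ a 0) (hb : AnalyticAt ℝ b 0)
    (hc : AnalyticAt ℝ c 0) (hd : AnalyticAt ℝ d 0) :
    D (fun t => a t * b t + c t * d t) =ᶠ[nhds 0]
      fun t => (D a t * b t + a t * D b t) + (D c t * d t + c t * D d t) :=
  (evAdd (ha.mul hb) (hc.mul hd)).trans ((evMul ha hb).add (evMul hc hd))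

lemma evMul4 {a b c d e f g h : ℝ → ℝ} (ha : AnalyticAt ℝ a 0) (hb : AnalyticAt ℝ b 0)
    (hc : AnalyticAt ℝ c 0) (hd : AnalyticAt ℝ d 0) (he : AnalyticAt ℝ e 0)
    (hf : AnalyticAt ℝ f 0) (hg : AnalyticAt ℝ g 0) (hh : AnalyticAt ℝ h 0) :
    D (fun t => (a t * b t + c t * d t) + (e t * f t + g t * h t)) =ᶠ[nhds 0]
      fun t => ((D a t * b t + a t * D b t) + (D c t * d t + c t * D d t)) +
        ((D e t * f t + e t * D f t) + (D g t * h t + g t * D h t)) :=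
  (evAdd ((ha.mul hb).add (hc.mul hd)) ((he.mul hf).add (hg.mul hh))).trans
    ((evMul2 ha hb hc hd).add (evMul2 he hf hg hh))

lemma itd1 (f : ℝ → ℝ) : iteratedDeriv 1 f = D f := iteratedDeriv_one
lemma itd2 (f : ℝ → ℝ) : iteratedDeriv 2 f = D (D f) := by
  rw [show (2:ℕ) = 1+1 from rfl, iteratedDeriv_succ, itd1]
lemma itd3 (f : ℝ → ℝ) : iteratedDeriv 3 f = D (D (D f)) := by
  rw [show (3:ℕ) = 2+1 from rfl, iteratedDeriv_succ, itd2]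
lemma itd4 (f : ℝ → ℝ) : iteratedDeriv 4 f = D (D (D (D f))) := by
  rw [show (4:ℕ) = 3+1 from rfl, iteratedDeriv_succ, itd3]
lemma itd5 (f : ℝ → ℝ) : iteratedDeriv 5 f = D (D (D (D (D f)))) := by
  rw [show (5:ℕ) = 4+1 from rfl, iteratedDeriv_succ, itd4]

lemma ord_eq_of (f : ℝ → ℝ) (n : ℕ) (h0 : ∀ i < n, iteratedDeriv i f 0 = 0)
    (hn : iteratedDeriv n f 0 ≠ 0) : sInf {i : ℕ | iteratedDeriv i f 0 ≠ 0} = n := by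
  have hmem : n ∈ {i : ℕ | iteratedDeriv i f 0 ≠ 0} := hn
  refine le_antisymm (Nat.sInf_le hmem) (le_csInf ⟨n, hmem⟩ ?_)
  intro m hm
  by_contra h
  exact hm (h0 m (not_le.mp h))

/-- Orders of the base components of an integral curve of the level-two
Kumpera–Rubin Pfaffian system in the class `RVV`. -/
theorem ord_of_RVV_integral_curve (x y z u v u₂ v₂ : ℝ → ℝ)
    (hx : AnalyticAt ℝ x 0) (hy : AnalyticAt ℝ y 0) (hz : AnalyticAt ℝ z 0)
    (hu : AnalyticAt ℝ u 0) (hv : AnalyticAt ℝ v 0)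
    (hu₂ : AnalyticAt ℝ u₂ 0) (hv₂ : AnalyticAt ℝ v₂ 0)
    (hx0 : x 0 = 0) (hy0 : y 0 = 0) (hz0 : z 0 = 0)
    (hu0 : u 0 = 0) (hv0 : v 0 = 0) (hu₂0 : u₂ 0 = 0) (hv₂0 : v₂ 0 = 0)
    (h1 : ∀ᶠ t in nhds (0 : ℝ), deriv y t = u t * deriv x t)
    (h2 : ∀ᶠ t in nhds (0 : ℝ), deriv z t = v t * deriv x t)
    (h3 : ∀ᶠ t in nhds (0 : ℝ), deriv x t = u₂ t * deriv u t)
    (h4 : ∀ᶠ t in nhds (0 : ℝ), deriv v t = v₂ t * deriv u t)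
    (hu' : deriv u 0 = 0) (hu'' : iteratedDeriv 2 u 0 ≠ 0)
    (hu₂' : deriv u₂ 0 ≠ 0) :
    ord x = 3 ∧ ord y = 5 := by
  -- analyticity of iterated derivatives
  have ax1 : AnalyticAt ℝ (D x) 0 := aDeriv hx
  have ax2 : AnalyticAt ℝ (D (D x)) 0 := aDeriv ax1
  have ax3 : AnalyticAt ℝ (D (D (D x))) 0 := aDeriv ax2
  have ax4 : AnalyticAt ℝ (D (D (D (D x)))) 0 := aDeriv ax3
  have au1 : AnalyticAt ℝ (D u) 0 := aDeriv hu
  have au2 : AnalyticAt ℝ (D (D u)) 0 := aDeriv au1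
  have au3 : AnalyticAt ℝ (D (D (D u))) 0 := aDeriv au2
  have aw1 : AnalyticAt ℝ (D u₂) 0 := aDeriv hu₂
  -- chain for x
  have ex1 : D x =ᶠ[nhds 0] fun t => u₂ t * D u t := h3
  have ex2 : D (D x) =ᶠ[nhds 0] fun t => D u₂ t * D u t + u₂ t * D (D u) t :=
    ex1.deriv.trans (evMul hu₂ au1)
  have ex3 : D (D (D x)) =ᶠ[nhds 0]
      fun t => (D (D u₂) t * D u t + D u₂ t * D (D u) t) +
        (D u₂ t * D (D u) t + u₂ t * D (D (D u)) t) :=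
    ex2.deriv.trans (evMul2 aw1 au1 hu₂ au2)
  -- values of x derivatives at 0
  have hu2ne : D (D u) 0 ≠ 0 := by rw [← itd2]; exact hu''
  have vx1 : D x 0 = 0 := by
    have h := ex1.eq_of_nhds; simp only [hu₂0, hu', mul_zero, zero_mul] at h; exact h
  have vx2 : D (D x) 0 = 0 := by
    have h := ex2.eq_of_nhds
    simp only [hu₂0, hu', mul_zero, zero_mul, add_zero, zero_add] at h; exact h
  have vx3 : D (D (D x)) 0 = 2 * (D u₂ 0 * D (D u) 0) := by
    have h := ex3.eq_of_nhds
    simp only [hu₂0, hu', mul_zero, zero_mul, add_zero, zero_add] at h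
    rw [h]; ring
  have vx3ne : D (D (D x)) 0 ≠ 0 := by
    rw [vx3]
    exact mul_ne_zero two_ne_zero (mul_ne_zero hu₂' hu2ne)
  -- chain for y
  have ey1 : D y =ᶠ[nhds 0] fun t => u t * D x t := h1
  have ey2 : D (D y) =ᶠ[nhds 0] fun t => D u t * D x t + u t * D (D x) t :=
    ey1.deriv.trans (evMul hu ax1)
  have ey3 : D (D (D y)) =ᶠ[nhds 0]
      fun t => (D (D u) t * D x t + D u t * D (D x) t) +
        (D u t * D (D x) t + u t * D (D (D x)) t) :=
    ey2.deriv.trans (evMul2 au1 ax1 hu ax2)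
  have ey4 : D (D (D (D y))) =ᶠ[nhds 0]
      fun t => ((D (D (D u)) t * D x t + D (D u) t * D (D x) t) +
          (D (D u) t * D (D x) t + D u t * D (D (D x)) t)) +
        ((D (D u) t * D (D x) t + D u t * D (D (D x)) t) +
          (D u t * D (D (D x)) t + u t * D (D (D (D x))) t)) :=
    ey3.deriv.trans (evMul4 au2 ax1 au1 ax2 au1 ax2 hu ax3)
  have ey5 : D (D (D (D (D y)))) =ᶠ[nhds 0]
      fun t => (((D (D (D (D u))) t * D x t + D (D (D u)) t * D (D x) t) +
          (D (D (D u)) t * D (D x) t + D (D u) t * D (D (D x)) t)) +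
        ((D (D (D u)) t * D (D x) t + D (D u) t * D (D (D x)) t) +
          (D (D u) t * D (D (D x)) t + D u t * D (D (D (D x))) t))) +
        (((D (D (D u)) t * D (D x) t + D (D u) t * D (D (D x)) t) +
          (D (D u) t * D (D (D x)) t + D u t * D (D (D (D x))) t)) +
         ((D (D u) t * D (D (D x)) t + D u t * D (D (D (D x))) t) +
          (D u t * D (D (D (D x))) t + u t * D (D (D (D (D x)))) t))) := by
    refine ey4.deriv.trans ?_
    have hA : AnalyticAt ℝ (fun t => (D (D (D u)) t * D x t + D (D u) t * D (D x) t) +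
        (D (D u) t * D (D x) t + D u t * D (D (D x)) t)) 0 :=
      ((au3.mul ax1).add (au2.mul ax2)).add ((au2.mul ax2).add (au1.mul ax3))
    have hB : AnalyticAt ℝ (fun t => (D (D u) t * D (D x) t + D u t * D (D (D x)) t) +
        (D u t * D (D (D x)) t + u t * D (D (D (D x))) t)) 0 :=
      ((au2.mul ax2).add (au1.mul ax3)).add ((au1.mul ax3).add (hu.mul ax4))
    exact (evAdd hA hB).trans
      ((evMul4 au3 ax1 au2 ax2 au2 ax2 au1 ax3).add (evMul4 au2 ax2 au1 ax3 au1 ax3 hu ax4))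
  -- values of y derivatives at 0
  have vy1 : D y 0 = 0 := by
    have h := ey1.eq_of_nhds; simp only [hu0, zero_mul] at h; exact h
  have vy2 : D (D y) 0 = 0 := by
    have h := ey2.eq_of_nhds
    simp only [hu0, hu', vx1, vx2, mul_zero, zero_mul, add_zero, zero_add] at h; exact h
  have vy3 : D (D (D y)) 0 = 0 := by
    have h := ey3.eq_of_nhds
    simp only [hu0, hu', vx1, vx2, mul_zero, zero_mul, add_zero, zero_add] at h; exact h
  have vy4 : D (D (D (D y))) 0 = 0 := by
    have h := ey4.eq_of_nhds
    simp only [hu0, hu', vx1, vx2, mul_zero, zero_mul, add_zero, zero_add] at h; exact h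
  have vy5 : D (D (D (D (D y)))) 0 = 6 * (D (D u) 0 * D (D (D x)) 0) := by
    have h := ey5.eq_of_nhds
    simp only [hu0, hu', vx1, vx2, mul_zero, zero_mul, add_zero, zero_add] at h
    rw [h]; ring
  have vy5ne : D (D (D (D (D y)))) 0 ≠ 0 := by
    rw [vy5]
    exact mul_ne_zero (by norm_num) (mul_ne_zero hu2ne vx3ne)
  constructor
  · unfold ord; apply ord_eq_of
    · intro i hi
      interval_cases i
      · simpa using hx0
      · rw [itd1]; exact vx1
      · rw [itd2]; exact vx2
    · rw [itd3]; exact vx3ne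
  · unfold ord; apply ord_eq_of
    · intro i hi
      interval_cases i
      · simpa using hy0
      · rw [itd1]; exact vy1
      · rw [itd2]; exact vy2
      · rw [itd3]; exact vy3
      · rw [itd4]; exact vy4
    · rw [itd5]; exact vy5ne
end

section
/- The curve germs (t³, t⁴, t⁵) and (t³, t⁴, 0) in ℝ³ are not RL-equivalent. (These are the two inequivalent normal forms for the class RVT at level three of the Monster tower.) -/
open Filter Asymptotics Topology

lemma strip {f : ℝ → ℝ} {k : ℕ}
    (h : (fun s => s * f s) =O[𝓝[≠] (0:ℝ)] fun s => s ^ (k+1)) :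
    f =O[𝓝[≠] (0:ℝ)] fun s => s ^ k := by
  rw [isBigO_iff] at h ⊢
  obtain ⟨C, hC⟩ := h
  refine ⟨C, ?_⟩
  filter_upwards [hC, self_mem_nhdsWithin] with s hs hs0
  have hs0' : (0:ℝ) < |s| := abs_pos.2 hs0
  rw [norm_mul, pow_succ, norm_mul] at hs
  rw [mul_comm ‖s‖ ‖f s‖, ← mul_assoc] at hs
  have : (0:ℝ) < ‖s‖ := hs0'
  exact le_of_mul_le_mul_right hs this

lemma val0 {f : ℝ → ℝ} {k : ℕ} (hf : ContinuousAt f 0)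
    (h : f =O[𝓝[≠] (0:ℝ)] fun s => s ^ (k+1)) : f 0 = 0 := by
  have h1 : Tendsto f (𝓝[≠] (0:ℝ)) (𝓝 (f 0)) :=
    (hf.tendsto).mono_left nhdsWithin_le_nhds
  have h2 : Tendsto f (𝓝[≠] (0:ℝ)) (𝓝 0) := by
    apply h.trans_tendsto
    have : Tendsto (fun s : ℝ => s ^ (k+1)) (𝓝 (0:ℝ)) (𝓝 ((0:ℝ) ^ (k+1))) :=
      (continuous_pow (k+1)).tendsto 0
    simpa [zero_pow] using this.mono_left nhdsWithin_le_nhds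
  exact tendsto_nhds_unique h1 h2

lemma coeffs_zero {a b c : ℝ}
    (h : (fun s : ℝ => a * s ^ 3 + b * s ^ 4 + c * s ^ 5) =O[𝓝 (0:ℝ)] fun s => s ^ 6) :
    a = 0 ∧ b = 0 ∧ c = 0 := by
  have h0 : (fun s : ℝ => a * s ^ 3 + b * s ^ 4 + c * s ^ 5) =O[𝓝[≠] (0:ℝ)] fun s => s ^ 6 :=
    h.mono nhdsWithin_le_nhds
  have h1 : (fun s : ℝ => a + b * s + c * s ^ 2) =O[𝓝[≠] (0:ℝ)] fun s => s ^ 3 := by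
    apply strip; apply strip; apply strip
    have : (fun s : ℝ => s * (s * (s * (a + b * s + c * s ^ 2)))) =
        fun s : ℝ => a * s ^ 3 + b * s ^ 4 + c * s ^ 5 := by
      funext s; ring
    rw [this]; exact h0
  have ha : a = 0 := by
    have := val0 (f := fun s : ℝ => a + b * s + c * s ^ 2) (k := 2)
      (by fun_prop) h1
    simpa using this
  subst ha
  have h2 : (fun s : ℝ => b + c * s) =O[𝓝[≠] (0:ℝ)] fun s => s ^ 2 := by
    apply strip
    have : (fun s : ℝ => s * (b + c * s)) = fun s : ℝ => 0 + b * s + c * s ^ 2 := by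
      funext s; ring
    rw [this]; exact h1
  have hb : b = 0 := by
    have := val0 (f := fun s : ℝ => b + c * s) (k := 1) (by fun_prop) h2
    simpa using this
  subst hb
  have h3 : (fun _ : ℝ => c) =O[𝓝[≠] (0:ℝ)] fun s => s ^ 1 := by
    apply strip
    have : (fun s : ℝ => s * c) = fun s : ℝ => 0 + c * s := by funext s; ring
    rw [this]; exact h2
  have hc : c = 0 := val0 (f := fun _ : ℝ => c) (k := 0) (by fun_prop) (by simpa using h3)
  exact ⟨rfl, rfl, hc⟩



/-- The curves `(t³, t⁴, t⁵)` and `(t³, t⁴, 0)` are not RL-equivalent. -/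
theorem not_RLEquiv_t3_t4_t5_and_t3_t4_0 :
    ¬ RLEquiv (fun t : ℝ => ![t ^ 3, t ^ 4, t ^ 5])
      (fun t : ℝ => ![t ^ 3, t ^ 4, 0]) := by
  intro h
  obtain ⟨Φ, τ, hΦ, hΦ0, hbij, hτ, hτ0, hτ', heq⟩ := h
  set γ : ℝ → Fin 3 → ℝ := fun t => ![t ^ 3, t ^ 4, t ^ 5] with hγdef
  have hγ0 : γ 0 = 0 := by funext i; fin_cases i <;> simp [hγdef]
  set P : (Fin 3 → ℝ) → ℝ := fun x => Φ x 2 with hPdef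
  have hPanal : AnalyticAt ℝ P 0 := by
    have hproj : AnalyticAt ℝ (fun x : Fin 3 → ℝ => x 2) (Φ 0) :=
      (ContinuousLinearMap.proj (R := ℝ) (φ := fun _ : Fin 3 => ℝ) 2).analyticAt _
    exact hproj.comp hΦ
  have hP0 : P 0 = 0 := by simp [hPdef, hΦ0]
  -- pushforward of the neighborhood filter by τ
  have hτstrict : HasStrictDerivAt τ (deriv τ 0) 0 := by
    have h := hτ.hasStrictFDerivAt.hasStrictDerivAt
    simpa [fderiv_apply_one_eq_deriv] using h
  have hmap : map τ (𝓝 (0:ℝ)) = 𝓝 (0:ℝ) := by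
    have := hτstrict.map_nhds_eq hτ'
    rwa [hτ0] at this
  have hPγ : ∀ᶠ s in 𝓝 (0:ℝ), P (γ s) = 0 := by
    rw [← hmap, eventually_map]
    filter_upwards [heq] with t ht
    have h2 := congrFun ht 2
    simp only [hPdef, hγdef]
    simp only [Matrix.cons_val_two, Matrix.tail_cons, Matrix.head_cons] at h2 ⊢
    exact h2.symm
  -- power series of P and the linear term
  obtain ⟨p, hp⟩ := hPanal
  set L : (Fin 3 → ℝ) →L[ℝ] ℝ := continuousMultilinearCurryFin1 ℝ (Fin 3 → ℝ) ℝ (p 1) with hLdef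
  have hfd : HasFDerivAt P L 0 := hp.hasFDerivAt
  have hrem : (fun y => P y - L y) =O[𝓝 (0 : Fin 3 → ℝ)] fun y => ‖y‖ ^ 2 := by
    have h2 := hp.isBigO_sub_partialSum_pow 2
    have hps : ∀ y, p.partialSum 2 y = L y := by
      intro y
      have hc0 : p 0 (fun _ => y) = 0 := by
        have := hp.coeff_zero (fun _ => y)
        rwa [hP0] at this
      simp only [FormalMultilinearSeries.partialSum, Finset.sum_range_succ,
        Finset.range_one, Finset.sum_singleton, hc0, zero_add, hLdef,
        continuousMultilinearCurryFin1_apply]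
      refine congrArg (p 1) (funext fun i => ?_)
      have hi : i = Fin.last 0 := Subsingleton.elim _ _
      rw [hi, Fin.snoc_last]
    simp only [zero_add] at h2
    have : (fun y => P y - L y) = fun y => P y - p.partialSum 2 y := by
      funext y; rw [hps]
    rw [this]; exact h2
  -- continuity / tendsto of γ
  have hγcont : Continuous γ := by
    rw [hγdef]
    apply continuous_pi
    intro i; fin_cases i <;> simp <;> fun_prop
  have hγtendsto : Tendsto γ (𝓝 (0:ℝ)) (𝓝 (0 : Fin 3 → ℝ)) := by
    have := hγcont.tendsto 0
    rwa [hγ0] at this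
  have h1 : (fun s => P (γ s) - L (γ s)) =O[𝓝 (0:ℝ)] fun s => ‖γ s‖ ^ 2 :=
    hrem.comp_tendsto hγtendsto
  have h2 : (fun s : ℝ => ‖γ s‖ ^ 2) =O[𝓝 (0:ℝ)] fun s => s ^ 6 := by
    rw [isBigO_iff]
    refine ⟨1, ?_⟩
    have habs : ∀ᶠ s : ℝ in 𝓝 0, |s| ≤ 1 := by
      have := Metric.closedBall_mem_nhds (0:ℝ) one_pos
      filter_upwards [this] with s hs
      simpa [Real.dist_eq] using hs
    filter_upwards [habs] with s hs
    have hnorm : ‖γ s‖ ≤ |s| ^ 3 := by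
      rw [pi_norm_le_iff_of_nonneg (by positivity)]
      intro i
      have key : ∀ k : ℕ, 3 ≤ k → |s| ^ k ≤ |s| ^ 3 := fun k hk =>
        pow_le_pow_of_le_one (abs_nonneg s) hs hk
      fin_cases i
      · simpa [hγdef, Real.norm_eq_abs, abs_pow] using key 3 le_rfl
      · simpa [hγdef, Real.norm_eq_abs, abs_pow] using key 4 (by norm_num)
      · simpa [hγdef, Real.norm_eq_abs, abs_pow] using key 5 (by norm_num)
    calc ‖‖γ s‖ ^ 2‖ = ‖γ s‖ ^ 2 := by
          rw [Real.norm_eq_abs, abs_of_nonneg (by positivity)]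
      _ ≤ (|s| ^ 3) ^ 2 := pow_le_pow_left₀ (norm_nonneg _) hnorm 2
      _ = 1 * ‖s ^ 6‖ := by rw [Real.norm_eq_abs, abs_pow]; ring
  have h3 : (fun s => L (γ s)) =O[𝓝 (0:ℝ)] fun s => s ^ 6 := by
    have hEq : (fun s => L (γ s)) =ᶠ[𝓝 (0:ℝ)] fun s => -(P (γ s) - L (γ s)) := by
      filter_upwards [hPγ] with s hs
      simp [hs]
    exact hEq.trans_isBigO (h1.trans h2).neg_left
  -- extract coefficients
  set a := L (Pi.single 0 1) with hadef
  set b := L (Pi.single 1 1) with hbdef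
  set c := L (Pi.single 2 1) with hcdef
  have hLγ : ∀ s : ℝ, L (γ s) = a * s ^ 3 + b * s ^ 4 + c * s ^ 5 := by
    intro s
    have hdecomp : γ s = s ^ 3 • (Pi.single 0 1 : Fin 3 → ℝ) + s ^ 4 • (Pi.single 1 1 : Fin 3 → ℝ)
        + s ^ 5 • (Pi.single 2 1 : Fin 3 → ℝ) := by
      funext i; fin_cases i <;> simp [hγdef, Pi.single_apply]
    rw [hdecomp]
    simp only [map_add, map_smul, smul_eq_mul]
    ring
  have h4 : (fun s : ℝ => a * s ^ 3 + b * s ^ 4 + c * s ^ 5) =O[𝓝 (0:ℝ)] fun s => s ^ 6 := by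
    have : (fun s : ℝ => a * s ^ 3 + b * s ^ 4 + c * s ^ 5) = fun s => L (γ s) := by
      funext s; rw [hLγ]
    rw [this]; exact h3
  obtain ⟨ha, hb, hc⟩ := coeffs_zero h4
  -- L vanishes identically
  have hLzero : ∀ v : Fin 3 → ℝ, L v = 0 := by
    intro v
    have hv : v = v 0 • (Pi.single 0 1 : Fin 3 → ℝ) + v 1 • (Pi.single 1 1 : Fin 3 → ℝ)
        + v 2 • (Pi.single 2 1 : Fin 3 → ℝ) := by
      funext i; fin_cases i <;> simp [Pi.single_apply]
    rw [hv]
    simp only [map_add, map_smul, smul_eq_mul, ← hadef, ← hbdef, ← hcdef, ha, hb, hc]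
    ring
  -- chain rule: fderiv P 0 = proj 2 ∘ fderiv Φ 0
  have hchain : HasFDerivAt P
      ((ContinuousLinearMap.proj (R := ℝ) (φ := fun _ : Fin 3 => ℝ) 2).comp (fderiv ℝ Φ 0)) 0 :=
    ((ContinuousLinearMap.proj (R := ℝ) (φ := fun _ : Fin 3 => ℝ) 2).hasFDerivAt).comp 0
      hΦ.differentiableAt.hasFDerivAt
  have hLeq : (ContinuousLinearMap.proj (R := ℝ) (φ := fun _ : Fin 3 => ℝ) 2).comp
      (fderiv ℝ Φ 0) = L := by
    rw [← hchain.fderiv, hfd.fderiv]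
  obtain ⟨v, hv⟩ := hbij.2 (Pi.single 2 1)
  have h5 : (fderiv ℝ Φ 0 v) 2 = 0 := by
    have := congrFun (congrArg DFunLike.coe hLeq) v
    simp only [ContinuousLinearMap.comp_apply, ContinuousLinearMap.proj_apply] at this
    rw [this]; exact hLzero v
  rw [hv] at h5
  simp at h5
end
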